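/- arXiv:1508.03778 — 2 statements merged into one kernel-verified Lean document; each statement's English description precedes it below -/
import Mathlib

section
/- Let X be a nonempty compact metric space without isolated points, let μ be a positive regular Borel measure on X, and let ε > 0. Then there exists a Cantor set C ⊆ X such that μ(X \ C) < ε. -/
open MeasureTheory

/-- A subset of a topological space is a Cantor set if, with the subspace topology,
it is homeomorphic to the Cantor space `ℕ → Bool`. -/
def IsCantorSet {X : Type*} [TopologicalSpace X] (C : Set X) : Prop :=
  Nonempty (C ≃ₜ (ℕ → Bool))

open Set Metric


lemma exists_thin_annulus {X : Type*} [MetricSpace X] [MeasurableSpace X] [BorelSpace X]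
    (μ : Measure X) [IsFiniteMeasure μ] (x : X) {a b η : ℝ} (hab : a < b) (hη : 0 < η) :
    ∃ s t : ℝ, a ≤ s ∧ s < t ∧ t ≤ b ∧
      μ (closedBall x t \ ball x s) ≤ ENNReal.ofReal η := by
  obtain ⟨n, hn⟩ : ∃ n : ℕ, μ univ / ENNReal.ofReal η < n := ENNReal.exists_nat_gt (by
    exact ENNReal.div_lt_top (measure_ne_top μ _) (by positivity) |>.ne)
  have hηne : ENNReal.ofReal η ≠ 0 := by positivity
  have hμn : μ univ < n * ENNReal.ofReal η := by
    rwa [ENNReal.div_lt_iff (Or.inl hηne) (Or.inl ENNReal.ofReal_ne_top)] at hn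
  have hn0 : 0 < n := by
    rcases Nat.eq_zero_or_pos n with h | h
    · exact absurd hμn (by simp [h])
    · exact h
  set u : ℝ := (b - a) / (2 * n) with hu
  have hupos : 0 < u := div_pos (by linarith) (by positivity)
  set s : ℕ → ℝ := fun i => a + 2 * i * u with hs
  by_contra hcon
  push_neg at hcon
  have key : ∀ i < n, ENNReal.ofReal η < μ (closedBall x (s i + u) \ ball x (s i)) := by
    intro i hi
    refine hcon (s i) (s i + u) ?_ (by linarith) ?_
    · simp only [hs]; nlinarith [Nat.cast_nonneg (α := ℝ) i]
    · have h1 : (i:ℝ) + 1 ≤ n := by exact_mod_cast hi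
      have hb : a + (2*(n:ℝ)) * u = b := by
        rw [hu, mul_div_assoc', mul_div_cancel_left₀ _ (mul_ne_zero two_ne_zero (Nat.cast_ne_zero.mpr hn0.ne'))]; ring
      simp only [hs]; nlinarith
  set A : ℕ → Set X := fun i => ball x (s i + 2*u) \ ball x (s i) with hA
  have hsub : ∀ i, closedBall x (s i + u) \ ball x (s i) ⊆ A i := fun i =>
    diff_subset_diff_left (closedBall_subset_ball (by linarith))
  have hmeas : ∀ i, MeasurableSet (A i) := fun i =>
    measurableSet_ball.diff measurableSet_ball
  have hdisj : ∀ i j, i < j → Disjoint (A i) (A j) := by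
    intro i j hij
    have hij' : s i + 2*u ≤ s j := by
      simp only [hs]
      have : (i:ℝ) + 1 ≤ j := by exact_mod_cast hij
      nlinarith
    refine Set.disjoint_left.mpr fun p hpi hpj => ?_
    exact hpj.2 (mem_ball.mpr (lt_of_lt_of_le (mem_ball.mp hpi.1) hij'))
  have hdisj' : (↑(Finset.range n) : Set ℕ).Pairwise (Function.onFun Disjoint A) := by
    intro i _ j _ hij
    rcases lt_or_gt_of_ne hij with h | h
    · exact hdisj i j h
    · exact (hdisj j i h).symm
  have hsum : (Finset.range n).sum (fun i => μ (A i)) = μ (⋃ i ∈ Finset.range n, A i) :=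
    (measure_biUnion_finset hdisj' fun i _ => hmeas i).symm
  have hlb : (n : ENNReal) * ENNReal.ofReal η ≤ (Finset.range n).sum (fun i => μ (A i)) := by
    calc (n : ENNReal) * ENNReal.ofReal η
        = (Finset.range n).sum (fun _ => ENNReal.ofReal η) := by
          simp [Finset.sum_const, mul_comm]
      _ ≤ _ := Finset.sum_le_sum fun i hi =>
          le_trans (le_of_lt (key i (Finset.mem_range.mp hi)))
            (measure_mono (hsub i))
  have : (n : ENNReal) * ENNReal.ofReal η ≤ μ univ :=
    hlb.trans (hsum.le.trans (measure_mono (subset_univ _)))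
  exact absurd (lt_of_lt_of_le hμn this) (lt_irrefl _)

lemma mem_foldr_union {X : Type*} (L : List (Set X)) (x : X) :
    x ∈ L.foldr (· ∪ ·) ∅ ↔ ∃ Q ∈ L, x ∈ Q := by
  induction L with
  | nil => simp
  | cons P rest ih => simp [ih]

lemma exists_splitting {X : Type*} [MetricSpace X] [CompactSpace X] [MeasurableSpace X]
    [BorelSpace X] (μ : Measure X) [IsFiniteMeasure μ] {E : Set X} (hE : Perfect E)
    (hne : E.Nonempty) {δ η : ℝ} (hδ : 0 < δ) (hη : 0 < η) :
    ∃ L : List (Set X), 2 ≤ L.length ∧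
      (∀ P ∈ L, Perfect P ∧ P.Nonempty ∧ P ⊆ E ∧ EMetric.diam P ≤ ENNReal.ofReal δ) ∧
      L.Pairwise Disjoint ∧ μ (E \ L.foldr (· ∪ ·) ∅) ≤ ENNReal.ofReal η := by
  classical
  obtain ⟨y, hy⟩ := hne
  obtain ⟨z, hz, hzy⟩ : ∃ z ∈ univ ∩ E, z ≠ y := by
    have := accPt_iff_nhds.mp (hE.acc y hy)
    exact this univ Filter.univ_mem
  have hd : 0 < dist y z := dist_pos.mpr (Ne.symm hzy)
  set d := dist y z with hdd
  set δ' := min δ d with hδ'def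
  have hδ' : 0 < δ' := lt_min hδ hd
  have hEcpt : IsCompact E := hE.closed.isCompact
  obtain ⟨F, hFfin, hFcov⟩ := (totallyBounded_iff.mp hEcpt.totallyBounded) (δ'/16) (by positivity)
  set cs : List X := y :: z :: hFfin.toFinset.toList with hcs
  set m := cs.length with hm
  have hm2 : 2 ≤ m := by simp [hm, hcs]
  have hmpos : (0:ℝ) < m := by positivity
  set c : ℕ → X := fun i => cs.getD i y with hc
  have hc0 : c 0 = y := rfl
  have hc1 : c 1 = z := rfl
  have hη' : 0 < η / m := by positivity
  have hex : ∀ i : ℕ, ∃ s t : ℝ, δ'/8 ≤ s ∧ s < t ∧ t ≤ δ'/4 ∧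
      μ (closedBall (c i) t \ ball (c i) s) ≤ ENNReal.ofReal (η / m) :=
    fun i => exists_thin_annulus μ (c i) (by linarith) hη'
  choose s t hs1 hst hs2 hann using hex
  have hspos : ∀ i, 0 < s i := fun i => lt_of_lt_of_le (by linarith) (hs1 i)
  have htd : ∀ i, t i < d := fun i =>
    lt_of_le_of_lt (hs2 i) (by have := min_le_right δ d; linarith)
  set U : ℕ → Set X := fun i =>
    ball (c i) (s i) \ ⋃ j ∈ Finset.range i, closedBall (c j) (t j) with hU
  have hUopen : ∀ i, IsOpen (U i) := by
    intro i
    exact isOpen_ball.sdiff (isClosed_biUnion_finset fun j _ => isClosed_closedBall)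
  set P : ℕ → Set X := fun i => closure (U i ∩ E) with hP
  have hPball : ∀ i, P i ⊆ closedBall (c i) (s i) := by
    intro i
    refine (closure_mono ?_).trans closure_ball_subset_closedBall
    exact fun p hp => hp.1.1
  have hPE : ∀ i, P i ⊆ E := by
    intro i
    have : U i ∩ E ⊆ E := inter_subset_right
    simpa [hE.closed.closure_eq] using closure_mono this
  have hPdiam : ∀ i, EMetric.diam (P i) ≤ ENNReal.ofReal δ := by
    intro i
    refine le_trans (EMetric.diam_mono (hPball i)) ?_
    have h1 : EMetric.diam (closedBall (c i) (s i)) ≤ ENNReal.ofReal (s i + s i) :=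
      EMetric.diam_le fun p hp q hq => by
        rw [edist_dist]
        refine ENNReal.ofReal_le_ofReal ?_
        calc dist p q ≤ dist p (c i) + dist (c i) q := dist_triangle _ _ _
          _ ≤ s i + s i := add_le_add hp (dist_comm (c i) q ▸ hq)
    refine h1.trans (ENNReal.ofReal_le_ofReal ?_)
    have h2 := hs2 i
    have h3 := hst i
    have h4 : δ' ≤ δ := min_le_left δ d
    linarith
  have hPdisj : ∀ i j, i < j → Disjoint (P i) (P j) := by
    intro i j hij
    have h1 : P i ⊆ ball (c i) (t i) :=
      (hPball i).trans (closedBall_subset_ball (hst i))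
    have h2 : P j ⊆ (ball (c i) (t i))ᶜ := by
      have hsub : U j ∩ E ⊆ (ball (c i) (t i))ᶜ := by
        intro p hp
        have : p ∉ closedBall (c i) (t i) := by
          intro hmem
          exact hp.1.2 (mem_biUnion (Finset.mem_range.mpr hij) hmem)
        exact fun hb => this (ball_subset_closedBall hb)
      exact isOpen_ball.isClosed_compl.closure_subset_iff.mpr hsub
    exact Set.disjoint_left.mpr fun p hpi hpj => (h2 hpj) (h1 hpi)
  set keep : Finset ℕ := (Finset.range m).filter (fun i => (U i ∩ E).Nonempty) with hkeep
  have h0keep : 0 ∈ keep := by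
    refine Finset.mem_filter.mpr ⟨Finset.mem_range.mpr (by omega), ⟨y, ?_, hy⟩⟩
    simp only [hU, mem_diff]
    constructor
    · rw [hc0]; exact mem_ball_self (hspos 0)
    · simp
  have h1keep : 1 ∈ keep := by
    refine Finset.mem_filter.mpr ⟨Finset.mem_range.mpr (by omega), ⟨z, ?_, hz.2⟩⟩
    simp only [hU, mem_diff]
    constructor
    · rw [hc1]; exact mem_ball_self (hspos 1)
    · simp only [Finset.mem_range, mem_iUnion]
      rintro ⟨j, hj, hmem⟩
      interval_cases j
      rw [hc0] at hmem
      rw [mem_closedBall, dist_comm] at hmem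
      exact absurd hmem (not_le.mpr (htd 0))
  refine ⟨(keep.sort (· ≤ ·)).map P, ?_, ?_, ?_, ?_⟩
  · rw [List.length_map, Finset.length_sort]
    have : ({0, 1} : Finset ℕ) ⊆ keep := by
      intro i hi
      rcases Finset.mem_insert.mp hi with h | h
      · exact h ▸ h0keep
      · exact (Finset.mem_singleton.mp h) ▸ h1keep
    calc 2 = ({0,1} : Finset ℕ).card := rfl
      _ ≤ keep.card := Finset.card_le_card this
  · rintro Q hQ
    obtain ⟨i, hi, rfl⟩ := List.mem_map.mp hQ
    have hikeep : i ∈ keep := (Finset.mem_sort (α := ℕ) (· ≤ ·)).mp hi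
    obtain ⟨w, hw⟩ := (Finset.mem_filter.mp hikeep).2
    have := hE.closure_nhds_inter w hw.2 hw.1 (hUopen i)
    exact ⟨this.1, this.2, hPE i, hPdiam i⟩
  · rw [List.pairwise_map]
    have hsorted := Finset.pairwise_sort keep (· ≤ ·)
    have hnodup := Finset.sort_nodup keep (· ≤ ·)
    exact (hsorted.and hnodup).imp fun {i j} h => hPdisj i j (lt_of_le_of_ne h.1 h.2)
  · have hLu : (((keep.sort (· ≤ ·)).map P).foldr (· ∪ ·) ∅ : Set X) = ⋃ i ∈ keep, P i := by
      ext p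
      rw [mem_foldr_union]
      simp [List.mem_map, Finset.mem_sort]
    rw [hLu]
    have hcover : E \ (⋃ i ∈ keep, P i) ⊆
        ⋃ i ∈ Finset.range m, (closedBall (c i) (t i) \ ball (c i) (s i)) := by
      rintro p ⟨hpE, hpP⟩
      by_contra hpann
      simp only [Finset.mem_range, mem_iUnion, mem_diff, not_exists, not_and, not_not] at hpann
      -- find a ball containing p
      obtain ⟨w, hwF, hpw⟩ := mem_iUnion₂.mp (hFcov hpE)
      have hwcs : w ∈ cs :=
        List.mem_cons_of_mem _ (List.mem_cons_of_mem _
          (Finset.mem_toList.mpr (hFfin.mem_toFinset.mpr hwF)))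
      obtain ⟨iw, hiw, hciw⟩ := List.mem_iff_getElem.mp hwcs
      have hciw' : c iw = w := by
        simp only [hc]
        rw [List.getD_eq_getElem _ _ hiw]
        exact hciw
      have hpiw : p ∈ ball (c iw) (s iw) := by
        rw [mem_ball, hciw']
        have : dist p w < δ'/16 := mem_ball.mp hpw
        have := hs1 iw
        linarith
      set S : Finset ℕ := (Finset.range m).filter (fun j => p ∈ closedBall (c j) (t j)) with hS
      have hSne : S.Nonempty := by
        refine ⟨iw, Finset.mem_filter.mpr ⟨Finset.mem_range.mpr hiw, ?_⟩⟩
        exact mem_closedBall.mpr (le_of_lt (lt_trans (mem_ball.mp hpiw) (hst iw)))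
      set i0 := S.min' hSne with hi0
      have hi0S : i0 ∈ S := S.min'_mem hSne
      have hi0m : i0 < m := Finset.mem_range.mp (Finset.mem_filter.mp hi0S).1
      have hpcB : p ∈ closedBall (c i0) (t i0) := (Finset.mem_filter.mp hi0S).2
      have hpball : p ∈ ball (c i0) (s i0) := hpann i0 hi0m hpcB
      have hpU : p ∈ U i0 := by
        refine ⟨hpball, ?_⟩
        intro hmem
        obtain ⟨j, hj, hjm⟩ := by
          simpa only [Finset.mem_range, mem_iUnion, exists_prop] using hmem
        have hjS : j ∈ S := Finset.mem_filter.mpr ⟨Finset.mem_range.mpr (hj.trans hi0m), hjm⟩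
        exact absurd (S.min'_le j hjS) (not_le.mpr hj)
      have hkeep' : i0 ∈ keep := Finset.mem_filter.mpr
        ⟨Finset.mem_range.mpr hi0m, ⟨p, hpU, hpE⟩⟩
      exact hpP (mem_biUnion hkeep' (subset_closure ⟨hpU, hpE⟩))
    calc μ (E \ ⋃ i ∈ keep, P i)
        ≤ μ (⋃ i ∈ Finset.range m, (closedBall (c i) (t i) \ ball (c i) (s i))) :=
          measure_mono hcover
      _ ≤ ∑ i ∈ Finset.range m, μ (closedBall (c i) (t i) \ ball (c i) (s i)) :=
          measure_biUnion_finset_le _ _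
      _ ≤ ∑ _i ∈ Finset.range m, ENNReal.ofReal (η / m) :=
          Finset.sum_le_sum fun i _ => hann i
      _ = (m : ENNReal) * ENNReal.ofReal (η / m) := by
          simp [Finset.sum_const, nsmul_eq_mul]
      _ = ENNReal.ofReal η := by
          rw [← ENNReal.ofReal_natCast m, ← ENNReal.ofReal_mul (Nat.cast_nonneg m)]
          congr 1
          field_simp

section Scheme
variable {X : Type*} [MetricSpace X] [CompactSpace X] [MeasurableSpace X] [BorelSpace X]

lemma headI_mem_of_ne_nil {α : Type*} [Inhabited α] {l : List α} (h : l ≠ []) :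
    l.headI ∈ l := by
  cases l with
  | nil => exact absurd rfl h
  | cons a t => exact List.mem_cons_self

open scoped Classical in
noncomputable def pick (μ : Measure X) [IsFiniteMeasure μ] (P : Set X) (δ η : ℝ) :
    List (Set X) :=
  if h : Perfect P ∧ P.Nonempty ∧ 0 < δ ∧ 0 < η then
    (exists_splitting μ h.1 h.2.1 h.2.2.1 h.2.2.2).choose
  else []

open scoped Classical in
lemma pick_spec (μ : Measure X) [IsFiniteMeasure μ] {P : Set X} (h1 : Perfect P)
    (h2 : P.Nonempty) {δ η : ℝ} (hδ : 0 < δ) (hη : 0 < η) :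
    2 ≤ (pick μ P δ η).length ∧
    (∀ Q ∈ pick μ P δ η, Perfect Q ∧ Q.Nonempty ∧ Q ⊆ P ∧
      EMetric.diam Q ≤ ENNReal.ofReal δ) ∧
    (pick μ P δ η).Pairwise Disjoint ∧
    μ (P \ (pick μ P δ η).foldr (· ∪ ·) ∅) ≤ ENNReal.ofReal η := by
  rw [pick, dif_pos ⟨h1, h2, hδ, hη⟩]
  exact (exists_splitting μ h1 h2 hδ hη).choose_spec

variable (μ : Measure X) [IsFiniteMeasure μ] (e : ℕ → ℝ)

noncomputable def nextList (n : ℕ) (s : List (Set X)) (b : Bool) : List (Set X) :=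
  match s with
  | [] => []
  | [P] => if b then (pick μ P ((2:ℝ)⁻¹ ^ n) (e n)).tail
           else [(pick μ P ((2:ℝ)⁻¹ ^ n) (e n)).headI]
  | P :: _ :: rest' => if b then s.tail else [P]

noncomputable def stateFn : List Bool → List (Set X)
  | [] => [Set.univ]
  | b :: l => nextList μ e l.length (stateFn l) b

variable [Nonempty X]

lemma stateFn_inv (hU : Perfect (univ : Set X)) (he : ∀ n, 0 < e n) (l : List Bool) :
    stateFn μ e l ≠ [] ∧ (∀ P ∈ stateFn μ e l, Perfect P ∧ P.Nonempty) ∧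
      (stateFn μ e l).Pairwise Disjoint := by
  induction l with
  | nil =>
    refine ⟨by simp [stateFn], ?_, by simp [stateFn]⟩
    intro P hP
    simp only [stateFn, List.mem_singleton] at hP
    exact hP ▸ ⟨hU, univ_nonempty⟩
  | cons b l ih =>
    obtain ⟨hne, hmem, hdisj⟩ := ih
    rcases hsl : stateFn μ e l with _ | ⟨P, _ | ⟨Q, rest⟩⟩
    · exact absurd hsl hne
    · rw [hsl] at hmem
      obtain ⟨hP, hPne⟩ := hmem P (List.mem_singleton_self P)
      have hspec := pick_spec μ hP hPne (δ := (2:ℝ)⁻¹ ^ l.length) (η := e l.length)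
        (by positivity) (he _)
      set ps := pick μ P ((2:ℝ)⁻¹ ^ l.length) (e l.length) with hps
      have hpsne : ps ≠ [] := by
        intro h
        rw [h] at hspec
        simp at hspec
      have htne : ps.tail ≠ [] := by
        intro h
        have h2 : ps.tail.length = 0 := by rw [h]; rfl
        rw [List.length_tail] at h2
        omega
      simp only [stateFn, hsl]
      cases b
      · simp only [nextList, Bool.false_eq_true, if_false]
        refine ⟨by simp, ?_, by simp⟩
        intro R hR
        rw [List.mem_singleton] at hR
        obtain ⟨h1, h2, _, _⟩ := hspec.2.1 ps.headI (headI_mem_of_ne_nil hpsne)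
        exact hR ▸ ⟨h1, h2⟩
      · simp only [nextList, if_true]
        refine ⟨htne, ?_, hspec.2.2.1.sublist (List.tail_sublist ps)⟩
        intro R hR
        obtain ⟨h1, h2, _, _⟩ := hspec.2.1 R (List.mem_of_mem_tail hR)
        exact ⟨h1, h2⟩
    · rw [hsl] at hmem hdisj
      simp only [stateFn, hsl]
      cases b
      · simp only [nextList, Bool.false_eq_true, if_false]
        refine ⟨by simp, ?_, by simp⟩
        intro R hR
        rw [List.mem_singleton] at hR
        exact hR ▸ hmem P List.mem_cons_self
      · simp only [nextList, if_true, List.tail_cons]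
        refine ⟨by simp, ?_, hdisj.of_cons⟩
        intro R hR
        exact hmem R (List.mem_cons_of_mem _ hR)

lemma disjoint_foldr {X : Type*} {S : Set X} {L : List (Set X)}
    (h : ∀ Q ∈ L, Disjoint S Q) : Disjoint S (L.foldr (· ∪ ·) ∅) := by
  induction L with
  | nil => simp
  | cons P rest ih =>
    simp only [List.foldr_cons, disjoint_union_right]
    exact ⟨h P List.mem_cons_self, ih fun Q hQ => h Q (List.mem_cons_of_mem _ hQ)⟩

lemma isClosed_foldr {X : Type*} [TopologicalSpace X] {L : List (Set X)}
    (h : ∀ Q ∈ L, IsClosed Q) : IsClosed (L.foldr (· ∪ ·) ∅) := by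
  induction L with
  | nil => simp
  | cons P rest ih =>
    exact (h P List.mem_cons_self).union (ih fun Q hQ => h Q (List.mem_cons_of_mem _ hQ))

noncomputable def lev {X : Type*} [MetricSpace X] [CompactSpace X] [MeasurableSpace X]
    [BorelSpace X] (μ : Measure X) [IsFiniteMeasure μ] (e : ℕ → ℝ) (l : List Bool) : Set X :=
  (stateFn μ e l).foldr (· ∪ ·) ∅

section Scheme2
variable {X : Type*} [MetricSpace X] [CompactSpace X] [MeasurableSpace X] [BorelSpace X]
  (μ : Measure X) [IsFiniteMeasure μ] (e : ℕ → ℝ) [Nonempty X]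

lemma stateFn_step (hU : Perfect (univ : Set X)) (he : ∀ n, 0 < e n) (b : Bool) (l : List Bool) :
    (∀ Q ∈ stateFn μ e (b :: l), ∃ P ∈ stateFn μ e l, Q ⊆ P) ∧
    Disjoint (lev μ e (false :: l)) (lev μ e (true :: l)) ∧
    μ (lev μ e l \ (lev μ e (false :: l) ∪ lev μ e (true :: l))) ≤ ENNReal.ofReal (e l.length) ∧
    (∀ Q ∈ stateFn μ e (b :: l), Q ∈ stateFn μ e l ∨
      EMetric.diam Q ≤ ENNReal.ofReal ((2:ℝ)⁻¹ ^ l.length)) ∧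
    ((stateFn μ e l).length = 1 → ∀ Q ∈ stateFn μ e (b :: l),
      EMetric.diam Q ≤ ENNReal.ofReal ((2:ℝ)⁻¹ ^ l.length)) := by
  obtain ⟨hne, hmem, hdisj⟩ := stateFn_inv μ e hU he l
  rcases hsl : stateFn μ e l with _ | ⟨P, _ | ⟨Q0, rest⟩⟩
  · exact absurd hsl hne
  · rw [hsl] at hmem
    obtain ⟨hP, hPne⟩ := hmem P (List.mem_singleton_self P)
    have hspec := pick_spec μ hP hPne (δ := (2:ℝ)⁻¹ ^ l.length) (η := e l.length)
      (by positivity) (he _)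
    set ps := pick μ P ((2:ℝ)⁻¹ ^ l.length) (e l.length) with hps
    obtain ⟨R, rest', hRr⟩ : ∃ R rest', ps = R :: rest' := by
      cases hcc : ps with
      | nil => rw [hcc] at hspec; simp at hspec
      | cons R rest' => exact ⟨R, rest', rfl⟩
    have hsf : ∀ b', stateFn μ e (b' :: l) = if b' then ps.tail else [ps.headI] := by
      intro b'
      simp only [stateFn, hsl, nextList, hps]
    have hlev0 : lev μ e (false :: l) = ps.headI := by
      rw [lev, hsf false, if_neg (by simp)]
      simp [lev]
    have hlev1 : lev μ e (true :: l) = ps.tail.foldr (· ∪ ·) ∅ := by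
      rw [lev, hsf true, if_pos rfl]
    have hheadtail : lev μ e (false :: l) ∪ lev μ e (true :: l) = ps.foldr (· ∪ ·) ∅ := by
      rw [hlev0, hlev1, hRr]
      simp
    refine ⟨?_, ?_, ?_, ?_, ?_⟩
    · intro Q hQ
      refine ⟨P, hsl ▸ List.mem_singleton_self P, ?_⟩
      rw [hsf b] at hQ
      rcases b with _ | _
      · rw [if_neg (by simp), List.mem_singleton] at hQ
        exact hQ ▸ (hspec.2.1 ps.headI (headI_mem_of_ne_nil (by rw [hRr]; simp))).2.2.1
      · rw [if_pos rfl] at hQ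
        exact (hspec.2.1 Q (List.mem_of_mem_tail hQ)).2.2.1
    · rw [hlev0, hlev1, hRr]
      simp only [List.headI, List.tail]
      refine disjoint_foldr fun Q hQ => ?_
      have := hspec.2.2.1
      rw [hRr] at this
      exact (List.pairwise_cons.mp this).1 Q hQ
    · rw [hheadtail, lev, hsl]
      simp only [List.foldr_cons, List.foldr_nil, union_empty]
      exact hspec.2.2.2
    · intro Q hQ
      rw [hsf b] at hQ
      rcases b with _ | _
      · rw [if_neg (by simp), List.mem_singleton] at hQ
        exact Or.inr (hQ ▸
          (hspec.2.1 ps.headI (headI_mem_of_ne_nil (by rw [hRr]; simp))).2.2.2)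
      · rw [if_pos rfl] at hQ
        exact Or.inr (hspec.2.1 Q (List.mem_of_mem_tail hQ)).2.2.2
    · intro _ Q hQ
      rw [hsf b] at hQ
      rcases b with _ | _
      · rw [if_neg (by simp), List.mem_singleton] at hQ
        exact hQ ▸ (hspec.2.1 ps.headI (headI_mem_of_ne_nil (by rw [hRr]; simp))).2.2.2
      · rw [if_pos rfl] at hQ
        exact (hspec.2.1 Q (List.mem_of_mem_tail hQ)).2.2.2
  · rw [hsl] at hmem hdisj
    have hsf : ∀ b', stateFn μ e (b' :: l) = if b' then Q0 :: rest else [P] := by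
      intro b'
      simp only [stateFn, hsl, nextList, List.tail_cons]
    have hlev0 : lev μ e (false :: l) = P := by
      rw [lev, hsf false, if_neg (by simp)]
      simp
    have hlev1 : lev μ e (true :: l) = (Q0 :: rest).foldr (· ∪ ·) ∅ := by
      rw [lev, hsf true, if_pos rfl]
    refine ⟨?_, ?_, ?_, ?_, ?_⟩
    · intro Q hQ
      rw [hsf b] at hQ
      rcases b with _ | _
      · rw [if_neg (by simp), List.mem_singleton] at hQ
        exact ⟨P, by simp [hsl], hQ ▸ subset_rfl⟩
      · rw [if_pos rfl] at hQ
        exact ⟨Q, by simp [hsl, hQ], subset_rfl⟩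
    · rw [hlev0, hlev1]
      exact disjoint_foldr fun Q hQ => (List.pairwise_cons.mp hdisj).1 Q hQ
    · have : lev μ e (false :: l) ∪ lev μ e (true :: l) = lev μ e l := by
        rw [hlev0, hlev1, lev, hsl]
        simp
      rw [this, diff_self]
      simp
    · intro Q hQ
      rw [hsf b] at hQ
      rcases b with _ | _
      · rw [if_neg (by simp), List.mem_singleton] at hQ
        exact Or.inl (by simp [hsl, hQ])
      · rw [if_pos rfl] at hQ
        exact Or.inl (by simp [hsl, hQ])
    · intro hlen _ _
      simp at hlen

end Scheme2

end Scheme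

section Scheme3
open CantorScheme PiNat
variable {X : Type*} [MetricSpace X] [CompactSpace X] [MeasurableSpace X] [BorelSpace X]
  (μ : Measure X) [IsFiniteMeasure μ] (e : ℕ → ℝ) [Nonempty X]

variable (hU : Perfect (univ : Set X)) (he : ∀ n, 0 < e n)

lemma subset_lev {l : List Bool} {P : Set X} (hP : P ∈ stateFn μ e l) : P ⊆ lev μ e l :=
  fun x hx => (mem_foldr_union _ x).mpr ⟨P, hP, hx⟩

include hU he

lemma lev_closed (l : List Bool) : IsClosed (lev μ e l) :=
  isClosed_foldr fun Q hQ => (((stateFn_inv μ e hU he l).2.1) Q hQ).1.closed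

lemma lev_nonempty (l : List Bool) : (lev μ e l).Nonempty := by
  obtain ⟨hne, hmem, _⟩ := stateFn_inv μ e hU he l
  obtain ⟨P, hP⟩ := List.exists_mem_of_ne_nil _ hne
  obtain ⟨x, hx⟩ := (hmem P hP).2
  exact ⟨x, subset_lev μ e hP hx⟩

lemma lev_antitone : CantorScheme.Antitone (lev μ e) := by
  intro l a x hx
  obtain ⟨Q, hQ, hxQ⟩ := (mem_foldr_union _ x).mp hx
  obtain ⟨P, hP, hQP⟩ := (stateFn_step μ e hU he a l).1 Q hQ
  exact subset_lev μ e hP (hQP hxQ)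

lemma lev_closureAntitone : CantorScheme.ClosureAntitone (lev μ e) :=
  (lev_antitone μ e hU he).closureAntitone (lev_closed μ e hU he)

lemma lev_disjoint : CantorScheme.Disjoint (lev μ e) := by
  intro l a b hab
  have h := (stateFn_step μ e hU he a l).2.1
  cases a <;> cases b
  · exact absurd rfl hab
  · exact h
  · exact h.symm
  · exact absurd rfl hab

lemma exists_singleton_ge (x : ℕ → Bool) (j : ℕ) :
    ∃ n, j ≤ n ∧ (stateFn μ e (res x n)).length = 1 := by
  obtain ⟨L, hL⟩ : ∃ L, (stateFn μ e (res x j)).length ≤ L := ⟨_, le_refl _⟩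
  induction L generalizing j with
  | zero =>
    exact absurd (List.length_eq_zero_iff.mp (Nat.le_zero.mp hL))
      (stateFn_inv μ e hU he (res x j)).1
  | succ L ih =>
    rcases hsl : stateFn μ e (res x j) with _ | ⟨P, _ | ⟨Q, rest⟩⟩
    · exact absurd hsl (stateFn_inv μ e hU he (res x j)).1
    · exact ⟨j, le_refl j, by rw [hsl]; rfl⟩
    · have hnext : stateFn μ e (res x (j+1)) =
          if x j then Q :: rest else [P] := by
        rw [res_succ]
        simp only [stateFn, hsl, nextList, List.tail_cons]
      cases hxj : x j
      · refine ⟨j+1, by omega, ?_⟩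
        rw [hnext, hxj]
        simp
      · have hlen : (stateFn μ e (res x (j+1))).length ≤ L := by
          rw [hnext, hxj]
          rw [hsl] at hL
          simp only [if_true, List.length_cons] at hL ⊢
          omega
        obtain ⟨n, hn, h1⟩ := ih (j+1) hlen
        exact ⟨n, by omega, h1⟩

lemma diam_pieces_of_singleton (x : ℕ → Bool) (n : ℕ)
    (h1 : (stateFn μ e (res x n)).length = 1) :
    ∀ m, n < m → ∀ Q ∈ stateFn μ e (res x m),
      EMetric.diam Q ≤ ENNReal.ofReal ((2:ℝ)⁻¹ ^ n) := by
  intro m hm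
  induction m, (Nat.succ_le_of_lt hm) using Nat.le_induction with
  | base =>
    intro Q hQ
    rw [res_succ] at hQ
    have := (stateFn_step μ e hU he (x n) (res x n)).2.2.2.2 h1 Q hQ
    rwa [res_length] at this
  | succ m hnm ih =>
    intro Q hQ
    rw [res_succ] at hQ
    rcases (stateFn_step μ e hU he (x m) (res x m)).2.2.2.1 Q hQ with h | h
    · exact ih (by omega) Q h
    · rw [res_length] at h
      refine h.trans (ENNReal.ofReal_le_ofReal ?_)
      exact pow_le_pow_of_le_one (by norm_num) (by norm_num) (by omega)

lemma lev_res_antitone (x : ℕ → Bool) {k m : ℕ} (hkm : k ≤ m) :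
    lev μ e (res x m) ⊆ lev μ e (res x k) := by
  induction m, hkm using Nat.le_induction with
  | base => exact subset_rfl
  | succ m hnm ih =>
    refine subset_trans ?_ ih
    rw [res_succ]
    exact lev_antitone μ e hU he (res x m) (x m)

lemma lev_vanishingDiam : CantorScheme.VanishingDiam (lev μ e) := by
  intro x
  rw [ENNReal.tendsto_atTop_zero]
  intro ε hε
  obtain ⟨j, hj⟩ : ∃ j, ENNReal.ofReal ((2:ℝ)⁻¹ ^ j) < ε := by
    have h2 : Filter.Tendsto (fun j : ℕ => ENNReal.ofReal ((2:ℝ)⁻¹ ^ j)) Filter.atTop (nhds 0) := by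
      rw [show (0:ENNReal) = ENNReal.ofReal 0 by simp]
      refine ENNReal.tendsto_ofReal ?_
      exact tendsto_pow_atTop_nhds_zero_of_lt_one (by norm_num) (by norm_num)
    have := h2.eventually_lt_const hε
    exact this.exists
  obtain ⟨n₁, hn₁j, hs₁⟩ := exists_singleton_ge μ e hU he x j
  obtain ⟨n₂, hn₂, hs₂⟩ := exists_singleton_ge μ e hU he x (n₁+1)
  refine ⟨n₂, fun m hm => ?_⟩
  obtain ⟨P₂, hP₂⟩ := List.length_eq_one_iff.mp hs₂
  have hlev : lev μ e (res x n₂) = P₂ ∪ ∅ := by rw [lev, hP₂]; rfl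
  have hd : EMetric.diam P₂ ≤ ENNReal.ofReal ((2:ℝ)⁻¹ ^ n₁) :=
    diam_pieces_of_singleton μ e hU he x n₁ hs₁ n₂ (by omega) P₂
      (by rw [hP₂]; exact List.mem_singleton_self _)
  calc EMetric.diam (lev μ e (res x m))
      ≤ EMetric.diam (lev μ e (res x n₂)) :=
        EMetric.diam_mono (lev_res_antitone μ e hU he x hm)
    _ = EMetric.diam P₂ := by rw [hlev, union_empty]
    _ ≤ ENNReal.ofReal ((2:ℝ)⁻¹ ^ n₁) := hd
    _ ≤ ENNReal.ofReal ((2:ℝ)⁻¹ ^ j) := ENNReal.ofReal_le_ofReal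
        (pow_le_pow_of_le_one (by norm_num) (by norm_num) (by omega))
    _ ≤ ε := hj.le

end Scheme3

def levels : ℕ → Finset (List Bool)
  | 0 => {[]}
  | n+1 => (levels n).biUnion fun l => {false :: l, true :: l}

lemma levels_card_le (n : ℕ) : (levels n).card ≤ 2^n := by
  induction n with
  | zero => simp [levels]
  | succ n ihn =>
    calc (levels (n+1)).card
        ≤ ∑ l ∈ levels n, ({false :: l, true :: l} : Finset (List Bool)).card :=
          Finset.card_biUnion_le
      _ ≤ ∑ _l ∈ levels n, 2 := Finset.sum_le_sum fun l _ => Finset.card_insert_le _ _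
      _ = (levels n).card * 2 := by simp [Finset.sum_const, smul_eq_mul]
      _ ≤ 2^n * 2 := Nat.mul_le_mul_right _ ihn
      _ = 2^(n+1) := by ring

lemma mem_levels (n : ℕ) (l : List Bool) : l ∈ levels n ↔ l.length = n := by
  induction n generalizing l with
  | zero => simp [levels, List.length_eq_zero_iff]
  | succ n ih =>
    simp only [levels, Finset.mem_biUnion, Finset.mem_insert, Finset.mem_singleton]
    constructor
    · rintro ⟨t, ht, rfl | rfl⟩ <;> simp [ih t |>.mp ht]
    · intro hl
      cases l with
      | nil => simp at hl
      | cons b t =>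
        refine ⟨t, (ih t).mpr (by simpa using hl), ?_⟩
        cases b
        · exact Or.inl rfl
        · exact Or.inr rfl

section Scheme4
open CantorScheme PiNat
variable {X : Type*} [MetricSpace X] [CompactSpace X] [MeasurableSpace X] [BorelSpace X]
  (μ : Measure X) [IsFiniteMeasure μ] (e : ℕ → ℝ) [Nonempty X]

noncomputable def Kn (n : ℕ) : Set X := ⋃ l ∈ levels n, lev μ e l

lemma Kn_zero : Kn μ e 0 = univ := by
  apply eq_univ_of_univ_subset
  intro x _
  have h1 : x ∈ lev μ e [] := by simp [lev, stateFn]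
  exact mem_biUnion (s := (levels 0 : Finset (List Bool))) (by simp [mem_levels]) h1

variable (hU : Perfect (univ : Set X)) (he : ∀ n, 0 < e n)
include hU he

lemma Kn_measurable (n : ℕ) : MeasurableSet (Kn μ e n) :=
  (levels n).measurableSet_biUnion fun l _ => (lev_closed μ e hU he l).measurableSet

lemma Kn_diff (n : ℕ) :
    μ (Kn μ e n \ Kn μ e (n+1)) ≤ (2^n : ENNReal) * ENNReal.ofReal (e n) := by
  have hsub : Kn μ e n \ Kn μ e (n+1) ⊆
      ⋃ l ∈ levels n, (lev μ e l \ (lev μ e (false :: l) ∪ lev μ e (true :: l))) := by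
    rintro x ⟨hx, hx'⟩
    obtain ⟨l, hl, hxl⟩ := mem_iUnion₂.mp hx
    refine mem_biUnion hl ⟨hxl, ?_⟩
    rintro (h | h)
    · exact hx' (mem_biUnion ((mem_levels _ _).mpr
        (by simp [(mem_levels _ _).mp hl])) h)
    · exact hx' (mem_biUnion ((mem_levels _ _).mpr
        (by simp [(mem_levels _ _).mp hl])) h)
  calc μ (Kn μ e n \ Kn μ e (n+1))
      ≤ ∑ l ∈ levels n, μ (lev μ e l \ (lev μ e (false :: l) ∪ lev μ e (true :: l))) :=
        le_trans (measure_mono hsub) (measure_biUnion_finset_le _ _)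
    _ ≤ ∑ _l ∈ levels n, ENNReal.ofReal (e n) := by
        refine Finset.sum_le_sum fun l hl => ?_
        have := (stateFn_step μ e hU he false l).2.2.1
        rwa [(mem_levels n l).mp hl] at this
    _ = ((levels n).card : ENNReal) * ENNReal.ofReal (e n) := by
        simp [Finset.sum_const, nsmul_eq_mul]
    _ ≤ (2^n : ENNReal) * ENNReal.ofReal (e n) := by
        refine mul_le_mul_left ?_ _
        have hcard : (levels n).card ≤ 2^n := levels_card_le n
        calc ((levels n).card : ENNReal) ≤ ((2^n : ℕ) : ENNReal) := by
              exact_mod_cast Nat.cast_le.mpr hcard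
          _ = (2^n : ENNReal) := by push_cast; rfl

lemma Kn_anti (n : ℕ) : Kn μ e (n+1) ⊆ Kn μ e n := by
  intro x hx
  obtain ⟨l, hl, hxl⟩ := mem_iUnion₂.mp hx
  have hlen := (mem_levels _ _).mp hl
  cases l with
  | nil => simp at hlen
  | cons b t =>
    refine mem_biUnion ((mem_levels _ _).mpr (by simpa using hlen)) ?_
    exact lev_antitone μ e hU he t b hxl

lemma Kn_compl_le (N : ℕ) :
    μ (Kn μ e N)ᶜ ≤ ∑ n ∈ Finset.range N, (2^n : ENNReal) * ENNReal.ofReal (e n) := by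
  induction N with
  | zero => simp [Kn_zero]
  | succ N ih =>
    have hsub : (Kn μ e (N+1))ᶜ ⊆ (Kn μ e N)ᶜ ∪ (Kn μ e N \ Kn μ e (N+1)) := by
      intro x hx
      by_cases h : x ∈ Kn μ e N
      · exact Or.inr ⟨h, hx⟩
      · exact Or.inl h
    calc μ (Kn μ e (N+1))ᶜ ≤ μ ((Kn μ e N)ᶜ ∪ (Kn μ e N \ Kn μ e (N+1))) := measure_mono hsub
      _ ≤ μ (Kn μ e N)ᶜ + μ (Kn μ e N \ Kn μ e (N+1)) := measure_union_le _ _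
      _ ≤ (∑ n ∈ Finset.range N, (2^n : ENNReal) * ENNReal.ofReal (e n)) +
            (2^N : ENNReal) * ENNReal.ofReal (e N) := add_le_add ih (Kn_diff μ e hU he N)
      _ = _ := by rw [Finset.sum_range_succ]

end Scheme4

section Scheme5
open CantorScheme PiNat Filter
variable {X : Type*} [MetricSpace X] [CompactSpace X] [MeasurableSpace X] [BorelSpace X]
  (μ : Measure X) [IsFiniteMeasure μ] (e : ℕ → ℝ) [Nonempty X]
variable (hU : Perfect (univ : Set X)) (he : ∀ n, 0 < e n)
include hU he

lemma lev_level_disjoint :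
    ∀ (l t : List Bool), l.length = t.length → l ≠ t → Disjoint (lev μ e l) (lev μ e t) := by
  intro l
  induction l with
  | nil =>
    intro t hlen hne
    cases t with
    | nil => exact absurd rfl hne
    | cons c t' => simp at hlen
  | cons a l ih =>
    intro t hlen hne
    cases t with
    | nil => simp at hlen
    | cons c t' =>
      simp only [List.length_cons, Nat.add_right_cancel_iff] at hlen
      by_cases hlt : l = t'
      · subst hlt
        have hac : a ≠ c := fun h => hne (by rw [h])
        exact lev_disjoint μ e hU he l hac
      · exact ((ih t' hlen hlt).mono
          (lev_antitone μ e hU he l a) (lev_antitone μ e hU he t' c))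

end Scheme5

theorem exists_cantorSet_almost_full_measure'
    {X : Type*} [MetricSpace X] [CompactSpace X] [Nonempty X]
    (hX : ∀ x : X, ¬ IsOpen ({x} : Set X))
    [MeasurableSpace X] [BorelSpace X]
    (μ : Measure X) [IsFiniteMeasure μ]
    {ε : ℝ} (hε : 0 < ε) :
    ∃ C : Set X, Nonempty (C ≃ₜ (ℕ → Bool)) ∧ μ Cᶜ < ENNReal.ofReal ε := by
  classical
  have hU : Perfect (univ : Set X) := by
    refine ⟨isClosed_univ, fun x _ => ?_⟩
    have hnb : (nhdsWithin x ({x}ᶜ : Set X)).NeBot := by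
      rw [← mem_closure_iff_nhdsWithin_neBot]
      by_contra hmem
      have hcl : closure ({x}ᶜ : Set X) = {x}ᶜ := by
        apply subset_antisymm _ subset_closure
        intro y hy
        rcases eq_or_ne y x with rfl | hne
        · exact absurd hy hmem
        · exact hne
      have hclosed : IsClosed ({x}ᶜ : Set X) := closure_eq_iff_isClosed.mp hcl
      exact hX x (by simpa using hclosed.isOpen_compl)
    show Filter.NeBot (nhdsWithin x ({x}ᶜ : Set X) ⊓ Filter.principal univ)
    rwa [Filter.principal_univ, inf_top_eq]
  set e : ℕ → ℝ := fun n => ε / 4^(n+1) with hedef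
  have he : ∀ n, 0 < e n := fun n => by positivity
  have hCA := lev_closureAntitone μ e hU he
  have hD := lev_disjoint μ e hU he
  have hVD := lev_vanishingDiam μ e hU he
  have hlne : ∀ l, (lev μ e l).Nonempty := lev_nonempty μ e hU he
  have hdom : (CantorScheme.inducedMap (lev μ e)).1 = Set.univ :=
    hCA.map_of_vanishingDiam hVD hlne
  have hmemdom : ∀ y : ℕ → Bool, y ∈ (CantorScheme.inducedMap (lev μ e)).1 := fun y => by
    rw [hdom]; trivial
  set f : (ℕ → Bool) → X :=
    fun y => (CantorScheme.inducedMap (lev μ e)).2 ⟨y, hmemdom y⟩ with hfdef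
  have hfmem : ∀ (y : ℕ → Bool) (n : ℕ), f y ∈ lev μ e (PiNat.res y n) :=
    fun y n => CantorScheme.map_mem ⟨y, hmemdom y⟩ n
  have hfc : Continuous f :=
    hVD.map_continuous.comp (Continuous.subtype_mk continuous_id _)
  have hfi : Function.Injective f := by
    intro y y' h
    have h2 := hD.map_injective (a₁ := ⟨y, hmemdom y⟩) (a₂ := ⟨y', hmemdom y'⟩) h
    simpa using congrArg Subtype.val h2
  set C : Set X := ⋂ n, Kn μ e n with hCdef
  have hrange : Set.range f = C := by
    apply subset_antisymm
    · rintro _ ⟨y, rfl⟩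
      refine mem_iInter.mpr fun n => ?_
      exact mem_biUnion ((mem_levels _ _).mpr (PiNat.res_length y n)) (hfmem y n)
    · intro x hx
      have key : ∀ l : List Bool, x ∈ lev μ e l → ∃ b : Bool, x ∈ lev μ e (b :: l) := by
        intro l hxl
        have hx1 : x ∈ Kn μ e (l.length + 1) := mem_iInter.mp hx _
        obtain ⟨l', hl', hxl'⟩ := mem_iUnion₂.mp hx1
        have hlen' := (mem_levels _ _).mp hl'
        cases l' with
        | nil => simp at hlen'
        | cons b t =>
          have hxt : x ∈ lev μ e t := lev_antitone μ e hU he t b hxl'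
          have hteq : t = l := by
            by_contra hne'
            refine Set.disjoint_left.mp
              (lev_level_disjoint μ e hU he t l (by simpa using hlen') hne') hxt hxl
          exact ⟨b, hteq ▸ hxl'⟩
      have hx0 : x ∈ lev μ e [] := by simp [lev, stateFn]
      let g : (n : ℕ) → {l : List Bool // x ∈ lev μ e l} := fun n =>
        Nat.rec ⟨[], hx0⟩
          (fun _ p => ⟨Classical.choose (key p.1 p.2) :: p.1,
            Classical.choose_spec (key p.1 p.2)⟩) n
      set y : ℕ → Bool := fun n => (g (n+1)).1.headI with hydef
      have hres : ∀ n, PiNat.res y n = (g n).1 := by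
        intro n
        induction n with
        | zero => rfl
        | succ n ih => rw [PiNat.res_succ, ih]; rfl
      have hxin : ∀ n, x ∈ lev μ e (PiNat.res y n) := fun n => (hres n) ▸ (g n).2
      refine ⟨y, ?_⟩
      have hedist : edist (f y) x ≤ 0 :=
        ge_of_tendsto' (hVD y) fun n =>
          EMetric.edist_le_diam_of_mem (hfmem y n) (hxin n)
      have : edist (f y) x = 0 := le_antisymm hedist zero_le
      exact edist_eq_zero.mp this
  have hμC : μ Cᶜ < ENNReal.ofReal ε := by
    have hKanti : Antitone (Kn μ e) := antitone_nat_of_succ_le (Kn_anti μ e hU he)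
    have hcompl : Cᶜ = ⋃ n, (Kn μ e n)ᶜ := by
      rw [hCdef, Set.compl_iInter]
    have hmono : Monotone (fun n => (Kn μ e n)ᶜ) := fun a b hab =>
      compl_subset_compl.mpr (hKanti hab)
    have hserie : ∀ N, μ (Kn μ e N)ᶜ ≤ ENNReal.ofReal (ε/2) := by
      intro N
      refine (Kn_compl_le μ e hU he N).trans ?_
      have hterm : ∀ n : ℕ, (2^n : ENNReal) * ENNReal.ofReal (e n) =
          (ENNReal.ofReal (ε/2) * 2⁻¹) * 2⁻¹^n := by
        intro n
        have hre : (2:ℝ)^n * (ε / 4^(n+1)) = ε/2 * 2⁻¹ * (2⁻¹:ℝ)^n := by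
          rw [inv_pow]
          have h4 : (4:ℝ)^(n+1) = (2^n*2) * (2^n*2) := by
            rw [← pow_succ, ← mul_pow]; norm_num
          rw [h4]
          have h2n : (0:ℝ) < 2^n := by positivity
          field_simp
        have h1 : (2^n : ENNReal) = ENNReal.ofReal ((2:ℝ)^n) := by
          rw [ENNReal.ofReal_pow (by norm_num)]; norm_num
        have h2 : ((2:ENNReal)⁻¹) = ENNReal.ofReal ((2:ℝ)⁻¹) := by
          rw [ENNReal.ofReal_inv_of_pos (by norm_num)]; norm_num
        calc (2^n : ENNReal) * ENNReal.ofReal (e n)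
            = ENNReal.ofReal ((2:ℝ)^n * (ε / 4^(n+1))) := by
              simp only [hedef]
              rw [h1, ← ENNReal.ofReal_mul (by positivity)]
          _ = ENNReal.ofReal (ε/2 * 2⁻¹ * (2⁻¹:ℝ)^n) := by rw [hre]
          _ = (ENNReal.ofReal (ε/2) * 2⁻¹) * 2⁻¹^n := by
              rw [ENNReal.ofReal_mul (by positivity), ENNReal.ofReal_mul (by positivity),
                ENNReal.ofReal_pow (by norm_num), h2]
      calc ∑ n ∈ Finset.range N, (2^n : ENNReal) * ENNReal.ofReal (e n)
          ≤ ∑' n : ℕ, (2^n : ENNReal) * ENNReal.ofReal (e n) := ENNReal.sum_le_tsum _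
        _ = (ENNReal.ofReal (ε/2) * 2⁻¹) * ∑' n : ℕ, (2:ENNReal)⁻¹^n := by
            simp_rw [hterm]
            rw [ENNReal.tsum_mul_left]
        _ = (ENNReal.ofReal (ε/2) * 2⁻¹) * 2 := by
            rw [ENNReal.tsum_geometric, ENNReal.one_sub_inv_two, inv_inv]
        _ = ENNReal.ofReal (ε/2) := by
            rw [mul_assoc, ENNReal.inv_mul_cancel (by norm_num) (by norm_num), mul_one]
    calc μ Cᶜ = μ (⋃ n, (Kn μ e n)ᶜ) := by rw [hcompl]
      _ = ⨆ n, μ (Kn μ e n)ᶜ := hmono.measure_iUnion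
      _ ≤ ENNReal.ofReal (ε/2) := iSup_le hserie
      _ < ENNReal.ofReal ε := (ENNReal.ofReal_lt_ofReal_iff hε).mpr (by linarith)
  refine ⟨C, ?_, hμC⟩
  have hmemC : ∀ y, f y ∈ C := fun y => hrange ▸ Set.mem_range_self y
  set f' : (ℕ → Bool) → C := fun y => ⟨f y, hmemC y⟩ with hf'def
  have hbij : Function.Bijective f' := by
    constructor
    · intro y y' h
      exact hfi (congrArg Subtype.val h)
    · rintro ⟨x, hx⟩
      rw [← hrange] at hx
      obtain ⟨y, hy⟩ := hx
      exact ⟨y, Subtype.ext hy⟩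
  have hf'c : Continuous f' := hfc.subtype_mk _
  have hcont : Continuous (Equiv.ofBijective f' hbij) := hf'c
  exact ⟨(hcont.homeoOfEquivCompactToT2).symm⟩


/-- Given a nonempty compact metric space `X` without isolated points, a (finite)
positive regular Borel measure `μ` on `X`, and `ε > 0`, there exists a Cantor set
`C ⊆ X` with `μ (X \ C) < ε`. -/
theorem exists_cantorSet_almost_full_measure
    {X : Type*} [MetricSpace X] [CompactSpace X] [Nonempty X]
    (hX : ∀ x : X, ¬ IsOpen ({x} : Set X))
    [MeasurableSpace X] [BorelSpace X]
    (μ : Measure X) [IsFiniteMeasure μ] [μ.InnerRegular] [μ.OuterRegular]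
    {ε : ℝ} (hε : 0 < ε) :
    ∃ C : Set X, IsCantorSet C ∧ μ Cᶜ < ENNReal.ofReal ε := by
  obtain ⟨C, hC, hμ⟩ := exists_cantorSet_almost_full_measure' hX μ hε
  exact ⟨C, hC, hμ⟩
end

section
/- Let X be a metric space and let μ be a σ-finite positive regular Borel measure on X. Then there exist an at most countable collection {C_n} of pairwise disjoint Cantor sets in X and an at most countable set S ⊆ X disjoint from each C_n such that μ(X \ ((⋃_n C_n) ∪ S)) = 0. -/
open MeasureTheory

set_option linter.unusedSectionVars false
set_option linter.unusedVariables false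
set_option maxHeartbeats 1000000

namespace CantorAux

open MeasureTheory Set ENNReal Filter

variable {X : Type*} [MetricSpace X] [MeasurableSpace X] [BorelSpace X]

noncomputable def pdiam (m : ℕ) : ℝ≥0∞ := (2⁻¹ : ℝ≥0∞) ^ m

lemma pdiam_pos (m : ℕ) : 0 < pdiam m := by
  simp [pdiam, ENNReal.pow_pos, ENNReal.inv_pos]

lemma pdiam_antitone : Antitone pdiam := by
  intro a b hab
  exact pow_le_pow_of_le_one (by simp) (by simp [ENNReal.inv_le_one]) hab

lemma pdiam_tendsto : Filter.Tendsto pdiam Filter.atTop (nhds 0) := by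
  apply ENNReal.tendsto_pow_atTop_nhds_zero_of_lt_one
  simp [ENNReal.inv_lt_one, one_lt_two]


lemma pdiam_ne_top (m : ℕ) : pdiam m ≠ ∞ := by
  simp [pdiam, ENNReal.pow_ne_top, ENNReal.inv_ne_top]


def Reg (ν : Measure X) : Prop :=
  ∀ A : Set X, MeasurableSet A → ∀ r, r < ν A → ∃ K, K ⊆ A ∧ IsCompact K ∧ r < ν K


def lU (L : List (Set X)) : Set X := ⋃ Q ∈ L, Q

@[simp] lemma lU_nil : lU ([] : List (Set X)) = ∅ := by simp [lU]

@[simp] lemma lU_cons (P : Set X) (L : List (Set X)) : lU (P :: L) = P ∪ lU L := by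
  simp [lU]

@[simp] lemma lU_singleton (P : Set X) : lU [P] = P := by simp [lU]

lemma subset_lU {L : List (Set X)} {Q : Set X} (h : Q ∈ L) : Q ⊆ lU L := by
  intro x hx; exact Set.mem_iUnion₂.2 ⟨Q, h, hx⟩

lemma lU_subset {L : List (Set X)} {A : Set X} (h : ∀ Q ∈ L, Q ⊆ A) : lU L ⊆ A := by
  intro x hx
  obtain ⟨Q, hQ, hxQ⟩ := Set.mem_iUnion₂.1 hx
  exact h Q hQ hxQ

lemma isClosed_lU {L : List (Set X)} (h : ∀ Q ∈ L, IsClosed Q) : IsClosed (lU L) := by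
  induction L with
  | nil => simp
  | cons P L ih =>
      simp only [lU_cons]
      exact (h P (by simp)).union (ih fun Q hQ => h Q (by simp [hQ]))

lemma isCompact_lU {L : List (Set X)} (h : ∀ Q ∈ L, IsCompact Q) : IsCompact (lU L) := by
  induction L with
  | nil => simp
  | cons P L ih =>
      simp only [lU_cons]
      exact (h P (by simp)).union (ih fun Q hQ => h Q (by simp [hQ]))

lemma disjoint_lU_right {A : Set X} {L : List (Set X)} (h : ∀ Q ∈ L, Disjoint A Q) :
    Disjoint A (lU L) := by
  rw [lU, Set.disjoint_iUnion₂_right]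
  exact h

lemma measure_lU (ν : Measure X) {L : List (Set X)} (h : ∀ Q ∈ L, IsClosed Q)
    (hd : L.Pairwise Disjoint) : ν (lU L) = (L.map ν).sum := by
  induction L with
  | nil => simp
  | cons P L ih =>
      simp only [lU_cons, List.map_cons, List.sum_cons]
      rw [measure_union _ ((isClosed_lU fun Q hQ => h Q (by simp [hQ])).measurableSet)]
      · rw [ih (fun Q hQ => h Q (by simp [hQ])) hd.of_cons]
      · exact disjoint_lU_right (List.pairwise_cons.1 hd).1


lemma exists_between {ν : Measure X} [NullSingletonClass ν] {K : Set X} (hK : IsCompact K)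
    (h0 : 0 < ν K) (hfin : ν K ≠ ∞) :
    ∃ A, MeasurableSet A ∧ A ⊆ K ∧ 0 < ν A ∧ ν A < ν K := by
  by_contra h
  push_neg at h
  have key : ∀ x : X, ∃ r : ℝ, 0 < r ∧ ν (K ∩ Metric.ball x r) = 0 := by
    intro x
    set s : ℕ → Set X := fun n => K ∩ Metric.ball x (1 / (n + 1)) with hs
    have hmeas : ∀ n, MeasurableSet (s n) :=
      fun n => (hK.isClosed.measurableSet).inter Metric.isOpen_ball.measurableSet
    have hanti : Antitone s := by
      intro a b hab
      apply Set.inter_subset_inter_right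
      apply Metric.ball_subset_ball
      apply one_div_le_one_div_of_le (by positivity)
      exact_mod_cast by exact_mod_cast add_le_add_left (Nat.cast_le.2 hab) 1
    have hfin' : ∃ n, ν (s n) ≠ ∞ :=
      ⟨0, (lt_of_le_of_lt (measure_mono inter_subset_left) (lt_top_iff_ne_top.2 hfin)).ne⟩
    have hlim := tendsto_measure_iInter_atTop (fun n => (hmeas n).nullMeasurableSet) hanti hfin'
    have hint : (⋂ n, s n) ⊆ {x} := by
      intro y hy
      simp only [Set.mem_iInter, hs, Set.mem_inter_iff, Metric.mem_ball] at hy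
      have hd : dist y x ≤ 0 := by
        apply ge_of_tendsto' tendsto_one_div_add_atTop_nhds_zero_nat
        intro n
        exact (hy n).2.le
      exact dist_le_zero.1 hd
    have h0' : ν (⋂ n, s n) = 0 := le_antisymm ((measure_mono hint).trans (by simp)) zero_le
    rw [h0'] at hlim
    obtain ⟨n, hn⟩ := (hlim.eventually_lt_const h0).exists
    refine ⟨1 / (n + 1), by positivity, ?_⟩
    by_contra hzero
    exact absurd (h _ (hmeas n) inter_subset_left (pos_iff_ne_zero.2 hzero)) (not_le.2 hn)
  choose r hr hr0 using key
  obtain ⟨t, ht⟩ := hK.elim_finite_subcover (fun x : X => Metric.ball x (r x))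
    (fun x => Metric.isOpen_ball) (fun x hx => Set.mem_iUnion.2 ⟨x, Metric.mem_ball_self (hr x)⟩)
  have : ν K ≤ ∑ x ∈ t, ν (K ∩ Metric.ball x (r x)) := by
    calc ν K = ν (⋃ x ∈ t, K ∩ Metric.ball x (r x)) := by
              rw [← Set.inter_iUnion₂]
              rw [Set.inter_eq_self_of_subset_left ht]
      _ ≤ _ := measure_biUnion_finset_le t _
  simp only [hr0, Finset.sum_const_zero] at this
  exact absurd this (by simpa using h0.ne')


lemma inner_approx {ν : Measure X} (hreg : Reg ν) {A : Set X} (hA : MeasurableSet A)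
    (h0 : 0 < ν A) (hfin : ν A ≠ ∞) {β : ℝ≥0∞} (hβ : 0 < β) :
    ∃ K, K ⊆ A ∧ IsCompact K ∧ 0 < ν K ∧ ν A ≤ ν K + β := by
  have h1 : ν A / 2 < ν A := ENNReal.half_lt_self h0.ne' hfin
  have h2 : ν A - β / 2 < ν A := by
    rcases eq_or_lt_of_le (zero_le : (0:ℝ≥0∞) ≤ ν A - β / 2) with h | h
    · exact h ▸ h0
    · exact ENNReal.sub_lt_self hfin h0.ne' (ENNReal.half_pos hβ.ne').ne'
  obtain ⟨K, hKA, hKc, hKm⟩ := hreg A hA (max (ν A / 2) (ν A - β / 2)) (max_lt h1 h2)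
  refine ⟨K, hKA, hKc, lt_of_le_of_lt (by positivity) (lt_of_le_of_lt (le_max_left _ _) hKm), ?_⟩
  have : ν A - β / 2 ≤ ν K := le_of_lt (lt_of_le_of_lt (le_max_right _ _) hKm)
  calc ν A ≤ ν K + β / 2 := tsub_le_iff_right.1 this
    _ ≤ ν K + β := by gcongr; exact ENNReal.half_le_self

lemma two_split {ν : Measure X} [NullSingletonClass ν] (hreg : Reg ν) {K : Set X} (hK : IsCompact K)
    (h0 : 0 < ν K) (hfin : ν K ≠ ∞) {β : ℝ≥0∞} (hβ : 0 < β) :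
    ∃ K1 K2 : Set X, IsCompact K1 ∧ IsCompact K2 ∧ K1 ⊆ K ∧ K2 ⊆ K ∧ Disjoint K1 K2 ∧
      0 < ν K1 ∧ 0 < ν K2 ∧ ν K ≤ ν K1 + ν K2 + β := by
  obtain ⟨A, hAm, hAK, hA0, hAlt⟩ := exists_between hK h0 hfin
  have hβ2 : (0:ℝ≥0∞) < β / 2 := ENNReal.half_pos hβ.ne'
  have hAfin : ν A ≠ ∞ := (hAlt.trans_le le_top).ne_top
  obtain ⟨K1, hK1A, hK1c, hK10, hK1m⟩ := inner_approx hreg hAm hA0 hAfin hβ2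
  have hBm : MeasurableSet (K \ A) := hK.isClosed.measurableSet.diff hAm
  have hB0 : 0 < ν (K \ A) := by
    by_contra h
    push_neg at h
    have hz : ν (K \ A) = 0 := le_antisymm h zero_le
    have : ν K ≤ ν A := by
      calc ν K ≤ ν (K ∩ A) + ν (K \ A) := measure_le_inter_add_diff ν K A
        _ = ν (K ∩ A) := by rw [hz, add_zero]
        _ ≤ ν A := measure_mono inter_subset_right
    exact absurd this (not_le.2 hAlt)
  have hBfin : ν (K \ A) ≠ ∞ := ((measure_mono diff_subset).trans_lt hfin.lt_top).ne
  obtain ⟨K2, hK2B, hK2c, hK20, hK2m⟩ := inner_approx hreg hBm hB0 hBfin hβ2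
  refine ⟨K1, K2, hK1c, hK2c, hK1A.trans hAK, hK2B.trans diff_subset, ?_, hK10, hK20, ?_⟩
  · exact Set.disjoint_of_subset hK1A hK2B disjoint_sdiff_right
  · calc ν K ≤ ν (K ∩ A) + ν (K \ A) := measure_le_inter_add_diff ν K A
      _ ≤ ν A + ν (K \ A) := by gcongr; exact inter_subset_right
      _ ≤ (ν K1 + β / 2) + (ν K2 + β / 2) := by gcongr
      _ = ν K1 + ν K2 + (β / 2 + β / 2) := by ring
      _ = ν K1 + ν K2 + β := by rw [ENNReal.add_halves]

lemma cover_split {ν : Measure X} (hreg : Reg ν) {r : ℝ≥0∞} :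
    ∀ (l : List X) (F : Set X), IsCompact F → ν F ≠ ∞ →
      (F ⊆ ⋃ x ∈ l, EMetric.ball x r) → ∀ ε : ℝ≥0∞, 0 < ε →
      ∃ L : List (Set X),
        (∀ Q ∈ L, IsCompact Q ∧ Q ⊆ F ∧ 0 < ν Q ∧ EMetric.diam Q ≤ 2 * r) ∧
        L.Pairwise Disjoint ∧ ν F ≤ (L.map ν).sum + ε := by
  intro l
  induction l with
  | nil =>
      intro F hFc hFfin hcov ε hε
      refine ⟨[], by simp, by simp, ?_⟩
      simp only [Set.mem_iUnion, List.not_mem_nil] at hcov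
      have hsub : F ⊆ ∅ := by intro x hx; simpa using hcov hx
      have hF0 : ν F = 0 := le_antisymm ((measure_mono hsub).trans_eq measure_empty) zero_le
      simp [hF0]
  | cons x l ih =>
      intro F hFc hFfin hcov ε hε
      set P : Set X := F ∩ EMetric.ball x r with hP
      set F' : Set X := F \ EMetric.ball x r with hF'
      have hF'c : IsCompact F' := hFc.diff EMetric.isOpen_ball
      have hF'fin : ν F' ≠ ∞ := ((measure_mono diff_subset).trans_lt hFfin.lt_top).ne
      have hF'cov : F' ⊆ ⋃ y ∈ l, EMetric.ball y r := by
        intro z hz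
        have := hcov hz.1
        simp only [Set.mem_iUnion, List.mem_cons] at this ⊢
        obtain ⟨y, hy, hzy⟩ := this
        rcases hy with rfl | hy
        · exact absurd hzy hz.2
        · exact ⟨y, hy, hzy⟩
      have hsplit : ν F ≤ ν P + ν F' := measure_le_inter_add_diff ν F _
      have hPm : MeasurableSet P := hFc.isClosed.measurableSet.inter
        EMetric.isOpen_ball.measurableSet
      have hPfin : ν P ≠ ∞ := ((measure_mono inter_subset_left).trans_lt hFfin.lt_top).ne
      rcases eq_or_lt_of_le (zero_le : (0:ℝ≥0∞) ≤ ν P) with hP0 | hP0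
      · obtain ⟨L, h1, h2, h3⟩ := ih F' hF'c hF'fin hF'cov ε hε
        refine ⟨L, fun Q hQ => ?_, h2, ?_⟩
        · obtain ⟨a, b, c, d⟩ := h1 Q hQ
          exact ⟨a, b.trans diff_subset, c, d⟩
        · calc ν F ≤ ν P + ν F' := hsplit
            _ = ν F' := by rw [← hP0, zero_add]
            _ ≤ _ := h3
      · have hε2 : (0:ℝ≥0∞) < ε / 2 := ENNReal.half_pos hε.ne'
        obtain ⟨K, hKP, hKc, hK0, hKm⟩ := inner_approx hreg hPm hP0 hPfin hε2
        obtain ⟨L, h1, h2, h3⟩ := ih F' hF'c hF'fin hF'cov (ε / 2) hε2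
        refine ⟨K :: L, ?_, ?_, ?_⟩
        · intro Q hQ'
          rcases List.mem_cons.1 hQ' with rfl | hQ
          · exact ⟨hKc, hKP.trans inter_subset_left, hK0,
              (EMetric.diam_mono (hKP.trans inter_subset_right)).trans EMetric.diam_ball⟩
          · obtain ⟨a, b, c, d⟩ := h1 Q hQ
            exact ⟨a, b.trans diff_subset, c, d⟩
        · refine List.pairwise_cons.2 ⟨fun Q hQ => ?_, h2⟩
          have hQF' : Q ⊆ F' := (h1 Q hQ).2.1
          exact Set.disjoint_of_subset (hKP.trans inter_subset_right) hQF' disjoint_sdiff_right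
        · calc ν F ≤ ν P + ν F' := hsplit
            _ ≤ (ν K + ε / 2) + ((L.map ν).sum + ε / 2) := by gcongr
            _ = (ν K + (L.map ν).sum) + (ε / 2 + ε / 2) := by ring
            _ = ((K :: L).map ν).sum + ε := by rw [ENNReal.add_halves]; simp

def GoodList (ν : Measure X) (m : ℕ) (bud : ℝ≥0∞) (P : Set X) (L : List (Set X)) : Prop :=
  2 ≤ L.length ∧
  (∀ Q ∈ L, IsCompact Q ∧ Q ⊆ P ∧ 0 < ν Q ∧ EMetric.diam Q ≤ pdiam m) ∧
  L.Pairwise Disjoint ∧ ν P ≤ (L.map ν).sum + bud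

lemma exists_goodList {ν : Measure X} [NullSingletonClass ν] (hreg : Reg ν) {P : Set X}
    (hP : IsCompact P) (h0 : 0 < ν P) (hfin : ν P ≠ ∞) (m : ℕ) {bud : ℝ≥0∞}
    (hbud : 0 < bud) : ∃ L, GoodList ν m bud P L := by
  set r : ℝ≥0∞ := pdiam m / 2 with hr
  have hr0 : 0 < r := ENNReal.div_pos (pdiam_pos m).ne' (by norm_num)
  have h2r : 2 * r = pdiam m := ENNReal.mul_div_cancel' (by norm_num) (by norm_num)
  obtain ⟨t, ht⟩ := hP.elim_finite_subcover (fun y : X => EMetric.ball y r)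
    (fun y => EMetric.isOpen_ball) (fun y hy => Set.mem_iUnion.2 ⟨y, EMetric.mem_ball_self hr0⟩)
  have hcov : P ⊆ ⋃ y ∈ t.toList, EMetric.ball y r := by
    intro z hz
    obtain ⟨y, hy⟩ := Set.mem_iUnion.1 (ht hz)
    simp only [Set.mem_iUnion₂, Set.mem_iUnion] at hy ⊢
    exact ⟨y, by simpa using hy⟩
  set β : ℝ≥0∞ := min bud (ν P) / 2 with hβ
  have hβ0 : 0 < β := ENNReal.div_pos (ne_of_gt (lt_min hbud h0)) (by norm_num)
  have hββ : β + β = min bud (ν P) := ENNReal.add_halves _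
  have hβbud : β ≤ bud := by
    calc β ≤ β + β := le_self_add
      _ = min bud (ν P) := hββ
      _ ≤ bud := min_le_left _ _
  have hβP : β < ν P := by
    calc β ≤ ν P / 2 := by rw [hβ]; gcongr; exact min_le_right _ _
      _ < ν P := ENNReal.half_lt_self h0.ne' hfin
  obtain ⟨L, h1, h2, h3⟩ := cover_split hreg t.toList P hP hfin hcov β hβ0
  rw [h2r] at h1
  match L, h1, h2, h3 with
  | [], h1, h2, h3 =>
      exfalso
      simp only [List.map_nil, List.sum_nil, zero_add] at h3
      exact absurd h3 (not_le.2 hβP)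
  | [Q], h1, h2, h3 =>
      obtain ⟨hQc, hQP, hQ0, hQd⟩ := h1 Q (by simp)
      have hQfin : ν Q ≠ ∞ := ((measure_mono hQP).trans_lt hfin.lt_top).ne
      obtain ⟨K1, K2, hc1, hc2, hs1, hs2, hdisj, hp1, hp2, hsum⟩ :=
        two_split hreg hQc hQ0 hQfin hβ0
      refine ⟨[K1, K2], by simp, ?_, ?_, ?_⟩
      · intro R hR
        rcases List.mem_cons.1 hR with rfl | hR
        · exact ⟨hc1, hs1.trans hQP, hp1, (EMetric.diam_mono hs1).trans hQd⟩
        rcases List.mem_cons.1 hR with rfl | hR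
        · exact ⟨hc2, hs2.trans hQP, hp2, (EMetric.diam_mono hs2).trans hQd⟩
        · simp at hR
      · simp [hdisj]
      · simp only [List.map_cons, List.sum_cons, List.map_nil, List.sum_nil, add_zero] at h3 ⊢
        calc ν P ≤ ν Q + β := h3
          _ ≤ (ν K1 + ν K2 + β) + β := by gcongr
          _ = ν K1 + ν K2 + (β + β) := by ring
          _ = ν K1 + ν K2 + min bud (ν P) := by rw [hββ]
          _ ≤ ν K1 + ν K2 + bud := by gcongr; exact min_le_left _ _
  | (Q1 :: Q2 :: L'), h1, h2, h3 =>
      exact ⟨Q1 :: Q2 :: L', by simp, h1, h2, h3.trans (by gcongr)⟩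


lemma exists_goodList' {ν : Measure X} [NullSingletonClass ν] (hreg : Reg ν) {P : Set X}
    (hP : IsCompact P) (h0 : 0 < ν P) (hfin : ν P ≠ ∞) (m : ℕ) {bud : ℝ≥0∞}
    (hbud : 0 < bud) : ∃ R T, GoodList ν m bud P (R :: T) := by
  obtain ⟨L, hL⟩ := exists_goodList hreg hP h0 hfin m hbud
  match L, hL with
  | (R :: T), hL => exact ⟨R, T, hL⟩


def nset (S : ℕ × List (Set X)) : Set X := lU S.2

@[simp] lemma nset_pair (m : ℕ) (l : List (Set X)) : nset (m, l) = lU l := rfl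

open scoped Classical in
noncomputable def step (ν : Measure X) (bud : ℝ≥0∞) (S : ℕ × List (Set X)) (b : Bool) :
    ℕ × List (Set X) :=
  match S with
  | (m, [P]) =>
      if h : ∃ R T, GoodList ν (m+1) bud P (R :: T) then
        (m+1, cond b [h.choose] h.choose_spec.choose)
      else (m, [P])
  | (m, P :: Q :: rest) => (m, cond b [P] (Q :: rest))
  | (m, []) => (m, [])

structure Inv (ν : Measure X) (S : ℕ × List (Set X)) : Prop where
  ne : S.2 ≠ []
  pd : S.2.Pairwise Disjoint
  mem : ∀ P ∈ S.2, IsCompact P ∧ 0 < ν P ∧ ν P ≠ ∞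
  dia : ∀ P ∈ S.2, S.1 = 0 ∨ EMetric.diam P ≤ pdiam S.1

section Step

variable {ν : Measure X} {bud : ℝ≥0∞} {m : ℕ} {P Q : Set X} {rest : List (Set X)}
  {S : ℕ × List (Set X)} {b : Bool}

lemma step_nil (b : Bool) : step ν bud (m, ([] : List (Set X))) b = (m, []) := rfl

lemma step_multi (b : Bool) :
    step ν bud (m, P :: Q :: rest) b = (m, cond b [P] (Q :: rest)) := rfl

lemma step_single (b : Bool) (h : ∃ R T, GoodList ν (m+1) bud P (R :: T)) :
    step ν bud (m, [P]) b = (m+1, cond b [h.choose] h.choose_spec.choose) := by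
  simp only [step]
  rw [dif_pos h]

lemma inv_step [NullSingletonClass ν] (hreg : Reg ν) (hbud : 0 < bud) (h : Inv ν S) (b : Bool) :
    Inv ν (step ν bud S b) := by
  obtain ⟨m, l⟩ := S
  match l, h with
  | [], h => exact absurd rfl h.ne
  | [P], h =>
      obtain ⟨hPc, hP0, hPfin⟩ := h.mem P (by simp)
      have hex : ∃ R T, GoodList ν (m+1) bud P (R :: T) :=
        exists_goodList' hreg hPc hP0 hPfin (m+1) hbud
      rw [step_single b hex]
      have hG : GoodList ν (m+1) bud P (hex.choose :: hex.choose_spec.choose) :=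
        hex.choose_spec.choose_spec
      have hmem : ∀ R ∈ (cond b [hex.choose] hex.choose_spec.choose),
          R ∈ hex.choose :: hex.choose_spec.choose := by
        cases b
        · simp only [cond_false]
          exact fun R hR => List.mem_cons_of_mem _ hR
        · simp only [cond_true]
          intro R hR
          simp only [List.mem_singleton] at hR
          simp [hR]
      constructor
      · cases b
        · simp only [cond_false]
          have := hG.1
          intro hnil
          rw [hnil] at this
          simp at this
        · simp
      · cases b
        · simp only [cond_false]
          exact hG.2.2.1.of_cons
        · simp
      · intro R hR
        obtain ⟨hc, hsub, hpos, _⟩ := hG.2.1 R (hmem R hR)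
        exact ⟨hc, hpos, ((measure_mono hsub).trans_lt hPfin.lt_top).ne⟩
      · intro R hR
        exact Or.inr (hG.2.1 R (hmem R hR)).2.2.2
  | (P :: Q :: rest), h =>
      rw [step_multi]
      cases b
      · simp only [cond_false]
        refine ⟨by simp, h.pd.of_cons, fun R hR => h.mem R (by simp [hR]), fun R hR => ?_⟩
        exact h.dia R (by simp [List.mem_cons.1 hR])
      · simp only [cond_true]
        refine ⟨by simp, by simp, fun R hR => ?_, fun R hR => ?_⟩
        · simp only [List.mem_singleton] at hR
          exact h.mem R (by simp [hR])
        · simp only [List.mem_singleton] at hR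
          exact h.dia R (by simp [hR])

lemma step_subset (b : Bool) : nset (step ν bud S b) ⊆ nset S := by
  obtain ⟨m, l⟩ := S
  match l with
  | [] => rw [step_nil]
  | [P] =>
      simp only [step]
      split
      · next h =>
          have hG : GoodList ν (m+1) bud P (h.choose :: h.choose_spec.choose) :=
            h.choose_spec.choose_spec
          have hsub : ∀ R ∈ h.choose :: h.choose_spec.choose, R ⊆ P :=
            fun R hR => (hG.2.1 R hR).2.1
          cases b
          · simp only [cond_false, nset_pair, lU_singleton]
            exact lU_subset fun R hR => hsub R (List.mem_cons_of_mem _ hR)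
          · simp only [cond_true, nset_pair, lU_singleton]
            exact hsub _ (by simp)
      · exact subset_rfl
  | (P :: Q :: rest) =>
      rw [step_multi]
      cases b
      · simp only [cond_false, nset_pair, lU_cons]
        exact Set.subset_union_right
      · simp only [cond_true, nset_pair, lU_singleton, lU_cons, lU_nil, Set.union_empty]
        exact Set.subset_union_left

lemma step_stage_le (b : Bool) : S.1 ≤ (step ν bud S b).1 := by
  obtain ⟨m, l⟩ := S
  match l with
  | [] => rw [step_nil]
  | [P] =>
      simp only [step]
      split
      · exact Nat.le_succ m
      · exact le_rfl
  | (P :: Q :: rest) => rw [step_multi]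

lemma step_stage_singleton [NullSingletonClass ν] (hreg : Reg ν) (hbud : 0 < bud) (h : Inv ν S)
    (hl : S.2.length = 1) (b : Bool) : (step ν bud S b).1 = S.1 + 1 := by
  obtain ⟨m, l⟩ := S
  match l, hl with
  | [P], _ =>
      obtain ⟨hPc, hP0, hPfin⟩ := h.mem P (by simp)
      have hex : ∃ R T, GoodList ν (m+1) bud P (R :: T) :=
        exists_goodList' hreg hPc hP0 hPfin (m+1) hbud
      rw [step_single b hex]

lemma step_len_true (hl : 2 ≤ S.2.length) : (step ν bud S true).2.length = 1 := by
  obtain ⟨m, l⟩ := S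
  match l, hl with
  | (P :: Q :: rest), _ => rw [step_multi]; simp

lemma step_len_false (hl : 2 ≤ S.2.length) :
    (step ν bud S false).2.length + 1 = S.2.length := by
  obtain ⟨m, l⟩ := S
  match l, hl with
  | (P :: Q :: rest), _ => rw [step_multi]; simp

lemma step_disjoint [NullSingletonClass ν] (hreg : Reg ν) (hbud : 0 < bud) (h : Inv ν S) :
    Disjoint (nset (step ν bud S false)) (nset (step ν bud S true)) := by
  obtain ⟨m, l⟩ := S
  match l, h with
  | [], h => exact absurd rfl h.ne
  | [P], h =>
      obtain ⟨hPc, hP0, hPfin⟩ := h.mem P (by simp)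
      have hex : ∃ R T, GoodList ν (m+1) bud P (R :: T) :=
        exists_goodList' hreg hPc hP0 hPfin (m+1) hbud
      rw [step_single false hex, step_single true hex]
      have hG : GoodList ν (m+1) bud P (hex.choose :: hex.choose_spec.choose) :=
        hex.choose_spec.choose_spec
      simp only [cond_false, cond_true, nset_pair, lU_singleton]
      exact (disjoint_lU_right (List.pairwise_cons.1 hG.2.2.1).1).symm
  | (P :: Q :: rest), h =>
      rw [step_multi, step_multi]
      simp only [cond_false, cond_true, nset_pair, lU_singleton]
      exact (disjoint_lU_right (List.pairwise_cons.1 h.pd).1).symm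

lemma step_loss [NullSingletonClass ν] (hreg : Reg ν) (hbud : 0 < bud) (h : Inv ν S) :
    ν (nset S \ (nset (step ν bud S false) ∪ nset (step ν bud S true))) ≤ bud := by
  obtain ⟨m, l⟩ := S
  match l, h with
  | [], h => exact absurd rfl h.ne
  | [P], h =>
      obtain ⟨hPc, hP0, hPfin⟩ := h.mem P (by simp)
      have hex : ∃ R T, GoodList ν (m+1) bud P (R :: T) :=
        exists_goodList' hreg hPc hP0 hPfin (m+1) hbud
      rw [step_single false hex, step_single true hex]
      have hG : GoodList ν (m+1) bud P (hex.choose :: hex.choose_spec.choose) :=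
        hex.choose_spec.choose_spec
      simp only [cond_false, cond_true, nset_pair, lU_singleton]
      set L := hex.choose :: hex.choose_spec.choose with hL
      have hunion : lU hex.choose_spec.choose ∪ hex.choose = lU L := by
        rw [hL, lU_cons, Set.union_comm]
      rw [hunion]
      have hclosed : ∀ R ∈ L, IsClosed R := fun R hR => (hG.2.1 R hR).1.isClosed
      have hUP : lU L ⊆ P := lU_subset fun R hR => (hG.2.1 R hR).2.1
      have hUm : MeasurableSet (lU L) := (isClosed_lU hclosed).measurableSet
      have hUfin : ν (lU L) ≠ ∞ := ((measure_mono hUP).trans_lt hPfin.lt_top).ne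
      have hsum : ν P ≤ ν (lU L) + bud := by
        rw [measure_lU ν hclosed hG.2.2.1]
        exact hG.2.2.2
      rw [measure_diff hUP hUm.nullMeasurableSet hUfin]
      exact tsub_le_iff_left.2 hsum
  | (P :: Q :: rest), h =>
      rw [step_multi, step_multi]
      simp only [cond_false, cond_true, nset_pair, lU_singleton, lU_cons, lU_nil,
        Set.union_empty]
      rw [Set.union_comm (Q ∪ lU rest) P]
      simp

lemma inv_nset_compact (h : Inv ν S) : IsCompact (nset S) :=
  isCompact_lU fun Q hQ => (h.mem Q hQ).1

lemma inv_nset_nonempty (h : Inv ν S) : (nset S).Nonempty := by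
  obtain ⟨m, l⟩ := S
  match l, h with
  | (P :: rest), h =>
      have := (h.mem P (by simp)).2.1
      obtain ⟨x, hx⟩ := nonempty_of_measure_ne_zero this.ne'
      exact ⟨x, by simp only [nset_pair, lU_cons]; exact Or.inl hx⟩

end Step


noncomputable def node (ν : Measure X) (bud : ℕ → ℝ≥0∞) (F : Set X) (σ : ℕ → Bool) :
    ℕ → ℕ × List (Set X)
  | 0 => (0, [F])
  | (n+1) => step ν (bud n) (node ν bud F σ n) (σ n)

section Node

variable {ν : Measure X} {bud : ℕ → ℝ≥0∞} {F : Set X} {σ τ : ℕ → Bool}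

lemma node_congr : ∀ {n : ℕ}, (∀ k < n, σ k = τ k) → node ν bud F σ n = node ν bud F τ n
  | 0, _ => rfl
  | (n+1), h => by
      have h1 : node ν bud F σ n = node ν bud F τ n :=
        node_congr fun k hk => h k (Nat.lt_succ_of_lt hk)
      show step ν (bud n) (node ν bud F σ n) (σ n) = step ν (bud n) (node ν bud F τ n) (τ n)
      rw [h1, h n (Nat.lt_succ_self n)]

variable [NullSingletonClass ν] (hreg : Reg ν) (hbud : ∀ n, 0 < bud n)
  (hF : IsCompact F) (h0 : 0 < ν F) (hfin : ν F ≠ ∞)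

include hreg hbud hF h0 hfin

lemma inv_node : ∀ n, Inv ν (node ν bud F σ n)
  | 0 => ⟨by simp [node], by simp [node], by
      intro P hP
      simp only [node, List.mem_singleton] at hP
      subst hP
      exact ⟨hF, h0, hfin⟩, fun P _ => Or.inl rfl⟩
  | (n+1) => inv_step hreg (hbud n) (inv_node n) (σ n)

omit [NullSingletonClass ν] hreg hbud hF h0 hfin in
lemma node_subset_succ (n : ℕ) :
    nset (node ν bud F σ (n+1)) ⊆ nset (node ν bud F σ n) := step_subset (σ n)

omit [NullSingletonClass ν] hreg hbud hF h0 hfin in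
lemma node_subset {m n : ℕ} (h : m ≤ n) :
    nset (node ν bud F σ n) ⊆ nset (node ν bud F σ m) := by
  induction n with
  | zero => rw [Nat.le_zero.1 h]
  | succ n ih =>
      rcases Nat.lt_or_ge m (n+1) with h' | h'
      · exact (node_subset_succ (σ := σ) n).trans (ih (Nat.lt_succ_iff.1 h'))
      · rw [le_antisymm h h']

omit [NullSingletonClass ν] hreg hbud hF h0 hfin in
lemma node_zero : nset (node ν bud F σ 0) = F := by simp [node]

omit [NullSingletonClass ν] hreg hbud hF h0 hfin in
lemma node_stage_mono {m n : ℕ} (h : m ≤ n) :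
    (node ν bud F σ m).1 ≤ (node ν bud F σ n).1 := by
  induction n with
  | zero => rw [Nat.le_zero.1 h]
  | succ n ih =>
      rcases Nat.lt_or_ge m (n+1) with h' | h'
      · exact (ih (Nat.lt_succ_iff.1 h')).trans (step_stage_le (σ n))
      · rw [le_antisymm h h']

lemma singleton_soon (σ : ℕ → Bool) : ∀ (L : ℕ) (n : ℕ), (node ν bud F σ n).2.length ≤ L + 1 →
    ∃ j, ((node ν bud F σ (n+j)).2.length = 1) := by
  intro L
  induction L with
  | zero =>
      intro n hn
      refine ⟨0, le_antisymm hn ?_⟩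
      have := (inv_node hreg hbud hF h0 hfin (σ := σ) n).ne
      exact Nat.one_le_iff_ne_zero.2 (fun hc => this (List.length_eq_zero_iff.1 hc))
  | succ L ih =>
      intro n hn
      rcases Nat.lt_or_ge (node ν bud F σ n).2.length 2 with h2 | h2
      · refine ⟨0, le_antisymm (Nat.lt_succ_iff.1 h2) ?_⟩
        have := (inv_node hreg hbud hF h0 hfin (σ := σ) n).ne
        exact Nat.one_le_iff_ne_zero.2 (fun hc => this (List.length_eq_zero_iff.1 hc))
      · cases hb : σ n with
        | true =>
            refine ⟨1, ?_⟩
            have : node ν bud F σ (n+1) = step ν (bud n) (node ν bud F σ n) true := by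
              rw [← hb]; rfl
            rw [this]
            exact step_len_true h2
        | false =>
            have hstep : node ν bud F σ (n+1) = step ν (bud n) (node ν bud F σ n) false := by
              rw [← hb]; rfl
            have hlen : (node ν bud F σ (n+1)).2.length + 1 = (node ν bud F σ n).2.length := by
              rw [hstep]; exact step_len_false h2
            have : (node ν bud F σ (n+1)).2.length ≤ L + 1 := by omega
            obtain ⟨j, hj⟩ := ih (n+1) this
            exact ⟨1 + j, by rwa [← Nat.add_assoc]⟩

lemma stage_unbounded (σ : ℕ → Bool) : ∀ k : ℕ, ∃ n, k ≤ (node ν bud F σ n).1 := by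
  intro k
  induction k with
  | zero => exact ⟨0, Nat.zero_le _⟩
  | succ k ih =>
      obtain ⟨n, hn⟩ := ih
      obtain ⟨j, hj⟩ := singleton_soon hreg hbud hF h0 hfin σ
        ((node ν bud F σ n).2.length - 1) n (by omega)
      have hstage : k ≤ (node ν bud F σ (n+j)).1 :=
        hn.trans (node_stage_mono (Nat.le_add_right n j))
      refine ⟨n + j + 1, ?_⟩
      have : (node ν bud F σ (n+j+1)).1 = (node ν bud F σ (n+j)).1 + 1 :=
        step_stage_singleton hreg (hbud _) (inv_node hreg hbud hF h0 hfin _) hj (σ (n+j))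
      omega

lemma small_singleton (σ : ℕ → Bool) (k : ℕ) :
    ∃ n P, (node ν bud F σ n).2 = [P] ∧ EMetric.diam P ≤ pdiam k ∧
      nset (node ν bud F σ n) = P := by
  obtain ⟨n, hn⟩ := stage_unbounded hreg hbud hF h0 hfin σ (k+1)
  obtain ⟨j, hj⟩ := singleton_soon hreg hbud hF h0 hfin σ
    ((node ν bud F σ n).2.length - 1) n (by omega)
  obtain ⟨P, hP⟩ := List.length_eq_one_iff.1 hj
  have hstage : k + 1 ≤ (node ν bud F σ (n+j)).1 :=
    hn.trans (node_stage_mono (Nat.le_add_right n j))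
  have hdia := (inv_node hreg hbud hF h0 hfin (σ := σ) (n+j)).dia P (by simp [hP])
  rcases hdia with h | h
  · omega
  · refine ⟨n + j, P, hP, h.trans (pdiam_antitone (by omega)), ?_⟩
    have : nset (node ν bud F σ (n+j)) = lU (node ν bud F σ (n+j)).2 := rfl
    rw [this, hP, lU_singleton]

end Node


/-- extension of a finite binary string to an infinite one -/
def ext {n : ℕ} (s : Fin n → Bool) : ℕ → Bool := fun k => if h : k < n then s ⟨k, h⟩ else false

lemma ext_lt {n : ℕ} (s : Fin n → Bool) {k : ℕ} (h : k < n) : ext s k = s ⟨k, h⟩ := dif_pos h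

noncomputable def lvl (ν : Measure X) (bud : ℕ → ℝ≥0∞) (F : Set X) (n : ℕ) : Set X :=
  ⋃ s : Fin n → Bool, nset (node ν bud F (ext s) n)

section Lvl

variable {ν : Measure X} {bud : ℕ → ℝ≥0∞} {F : Set X} {σ τ : ℕ → Bool}

lemma nset_node_subset_lvl (σ : ℕ → Bool) (n : ℕ) :
    nset (node ν bud F σ n) ⊆ lvl ν bud F n := by
  have h : node ν bud F σ n = node ν bud F (ext (fun i : Fin n => σ i)) n := by
    refine node_congr fun k hk => ?_
    rw [ext_lt _ hk]
  rw [h]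
  exact Set.subset_iUnion (fun s : Fin n → Bool => nset (node ν bud F (ext s) n)) _

lemma mem_lvl_iff {x : X} {n : ℕ} :
    x ∈ lvl ν bud F n ↔ ∃ σ : ℕ → Bool, x ∈ nset (node ν bud F σ n) := by
  constructor
  · intro hx
    obtain ⟨s, hs⟩ := Set.mem_iUnion.1 hx
    exact ⟨ext s, hs⟩
  · rintro ⟨σ, hσ⟩
    exact nset_node_subset_lvl σ n hσ

lemma lvl_zero : lvl ν bud F 0 = F := by
  rw [lvl]
  have : ∀ s : Fin 0 → Bool, nset (node ν bud F (ext s) 0) = F := fun s => node_zero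
  simp only [this]
  exact Set.iUnion_const F

/-- `step` applied to a node is a node one level deeper. -/
lemma step_node (σ : ℕ → Bool) (n : ℕ) (b : Bool) :
    step ν (bud n) (node ν bud F σ n) b
      = node ν bud F (fun k => if k < n then σ k else b) (n+1) := by
  set τ : ℕ → Bool := fun k => if k < n then σ k else b with hτ
  have h1 : node ν bud F τ n = node ν bud F σ n := node_congr fun k hk => by simp [hτ, hk]
  have h2 : τ n = b := by simp [hτ]
  show step ν (bud n) (node ν bud F σ n) b = step ν (bud n) (node ν bud F τ n) (τ n)
  rw [h1, h2]

lemma lvl_antitone_succ (n : ℕ) : lvl ν bud F (n+1) ⊆ lvl ν bud F n := by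
  intro x hx
  obtain ⟨σ, hσ⟩ := mem_lvl_iff.1 hx
  exact mem_lvl_iff.2 ⟨σ, node_subset_succ n hσ⟩

lemma lvl_antitone : Antitone (lvl ν bud F) := by
  apply antitone_nat_of_succ_le
  exact lvl_antitone_succ

variable [NullSingletonClass ν] (hreg : Reg ν) (hbud : ∀ n, 0 < bud n)
  (hF : IsCompact F) (h0 : 0 < ν F) (hfin : ν F ≠ ∞)

include hreg hbud hF h0 hfin

lemma lvl_compact (n : ℕ) : IsCompact (lvl ν bud F n) :=
  isCompact_iUnion fun s => inv_nset_compact (inv_node hreg hbud hF h0 hfin n)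

lemma node_disjoint : ∀ n : ℕ, (∃ k < n, σ k ≠ τ k) →
    Disjoint (nset (node ν bud F σ n)) (nset (node ν bud F τ n)) := by
  intro n
  induction n with
  | zero => rintro ⟨k, hk, -⟩; omega
  | succ n ih =>
      rintro ⟨k, hk, hne⟩
      by_cases hc : ∃ k < n, σ k ≠ τ k
      · exact ((ih hc).mono (node_subset_succ n) (node_subset_succ n))
      · push_neg at hc
        have hkn : k = n := by
          by_contra hkn
          exact hne (hc k (by omega))
        subst hkn
        have hpar : node ν bud F τ k = node ν bud F σ k := (node_congr hc).symm
        have hσs : nset (node ν bud F σ (k+1))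
            = nset (step ν (bud k) (node ν bud F σ k) (σ k)) := rfl
        have hτs : nset (node ν bud F τ (k+1))
            = nset (step ν (bud k) (node ν bud F σ k) (τ k)) := by
          show nset (step ν (bud k) (node ν bud F τ k) (τ k)) = _
          rw [hpar]
        rw [hσs, hτs]
        have hd := step_disjoint (bud := bud k) hreg (hbud k)
          (inv_node hreg hbud hF h0 hfin (σ := σ) k)
        cases hbσ : σ k <;> cases hbτ : τ k
        · exact absurd (hbσ.trans hbτ.symm) hne
        · exact hd
        · exact hd.symm
        · exact absurd (hbσ.trans hbτ.symm) hne

lemma lvl_loss (n : ℕ) :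
    ν (lvl ν bud F n \ lvl ν bud F (n+1)) ≤ (2:ℝ≥0∞) ^ n * bud n := by
  classical
  set A : (Fin n → Bool) → Set X := fun s =>
    nset (node ν bud F (ext s) n) \
      (nset (step ν (bud n) (node ν bud F (ext s) n) false) ∪
       nset (step ν (bud n) (node ν bud F (ext s) n) true)) with hA
  have hsub : lvl ν bud F n \ lvl ν bud F (n+1) ⊆ ⋃ s, A s := by
    intro x hx
    obtain ⟨s, hs⟩ := Set.mem_iUnion.1 hx.1
    refine Set.mem_iUnion.2 ⟨s, hs, fun hmem => hx.2 ?_⟩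
    rcases hmem with hmem | hmem
    · rw [step_node] at hmem
      exact nset_node_subset_lvl _ (n+1) hmem
    · rw [step_node] at hmem
      exact nset_node_subset_lvl _ (n+1) hmem
  calc ν (lvl ν bud F n \ lvl ν bud F (n+1)) ≤ ν (⋃ s, A s) := measure_mono hsub
    _ ≤ ∑' s : Fin n → Bool, ν (A s) := measure_iUnion_le A
    _ ≤ ∑' _ : Fin n → Bool, bud n := by
        apply ENNReal.tsum_le_tsum
        intro s
        exact step_loss hreg (hbud n) (inv_node hreg hbud hF h0 hfin n)
    _ = (Fintype.card (Fin n → Bool)) * bud n := by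
        rw [tsum_fintype]
        simp [Finset.sum_const, nsmul_eq_mul]
    _ = (2:ℝ≥0∞) ^ n * bud n := by
        congr 1
        simp [Fintype.card_fun]

end Lvl

noncomputable def limset (ν : Measure X) (bud : ℕ → ℝ≥0∞) (F : Set X) : Set X :=
  ⋂ n, lvl ν bud F n

section Limset

variable {ν : Measure X} {bud : ℕ → ℝ≥0∞} {F : Set X}

variable [NullSingletonClass ν] (hreg : Reg ν) (hbud : ∀ n, 0 < bud n)
  (hF : IsCompact F) (h0 : 0 < ν F) (hfin : ν F ≠ ∞)

include hreg hbud hF h0 hfin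

lemma limset_subset : limset ν bud F ⊆ F := by
  intro x hx
  have := Set.mem_iInter.1 hx 0
  rwa [lvl_zero] at this

lemma measure_diff_limset :
    ν (F \ limset ν bud F) ≤ ∑' n, (2:ℝ≥0∞) ^ n * bud n := by
  classical
  have hsub : F \ limset ν bud F ⊆ ⋃ n, (lvl ν bud F n \ lvl ν bud F (n+1)) := by
    intro x hx
    have hex : ∃ n, x ∉ lvl ν bud F n := by
      by_contra hc
      push_neg at hc
      exact hx.2 (Set.mem_iInter.2 hc)
    set k := Nat.find hex with hk
    have hknot : x ∉ lvl ν bud F k := Nat.find_spec hex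
    have hkpos : k ≠ 0 := by
      intro hc
      rw [hc, lvl_zero] at hknot
      exact hknot hx.1
    have hkin : x ∈ lvl ν bud F (k-1) := by
      by_contra hc
      have : k ≤ k - 1 := Nat.find_le hc
      omega
    refine Set.mem_iUnion.2 ⟨k-1, hkin, ?_⟩
    have : k - 1 + 1 = k := by omega
    rw [this]
    exact hknot
  calc ν (F \ limset ν bud F) ≤ ν (⋃ n, (lvl ν bud F n \ lvl ν bud F (n+1))) :=
        measure_mono hsub
    _ ≤ ∑' n, ν (lvl ν bud F n \ lvl ν bud F (n+1)) := measure_iUnion_le _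
    _ ≤ ∑' n, (2:ℝ≥0∞) ^ n * bud n :=
        ENNReal.tsum_le_tsum fun n => lvl_loss hreg hbud hF h0 hfin n

end Limset


theorem core {ν : Measure X} [NullSingletonClass ν] (hreg : Reg ν) {F : Set X} (hF : IsCompact F)
    (h0 : 0 < ν F) (hfin : ν F ≠ ∞) :
    ∃ C : Set X, C ⊆ F ∧ IsCompact C ∧ Nonempty (C ≃ₜ (ℕ → Bool)) ∧ 0 < ν C := by
  classical
  set p : ℝ≥0∞ := 2⁻¹ with hp
  set c : ℝ≥0∞ := ν F * p ^ 3 with hc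
  set bud : ℕ → ℝ≥0∞ := fun n => c * (p ^ n * p ^ n) with hbud_def
  have hp0 : p ≠ 0 := by rw [hp]; norm_num
  have hc0 : c ≠ 0 := mul_ne_zero h0.ne' (pow_ne_zero _ hp0)
  have hbud : ∀ n, 0 < bud n := by
    intro n
    rw [hbud_def]
    exact pos_iff_ne_zero.2 (mul_ne_zero hc0 (mul_ne_zero (pow_ne_zero _ hp0)
      (pow_ne_zero _ hp0)))
  have hinv : ∀ (σ : ℕ → Bool) (n : ℕ), Inv ν (node ν bud F σ n) :=
    fun σ n => inv_node hreg hbud hF h0 hfin n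
  have hnested : ∀ σ : ℕ → Bool, (⋂ n, nset (node ν bud F σ n)).Nonempty := fun σ =>
    IsCompact.nonempty_iInter_of_sequence_nonempty_isCompact_isClosed _
      (fun n => node_subset_succ n) (fun n => inv_nset_nonempty (hinv σ n))
      (inv_nset_compact (hinv σ 0)) (fun n => (inv_nset_compact (hinv σ n)).isClosed)
  set f : (ℕ → Bool) → X := fun σ => (hnested σ).some with hf
  have hfmem : ∀ σ n, f σ ∈ nset (node ν bud F σ n) :=
    fun σ n => Set.mem_iInter.1 (hnested σ).some_mem n
  have huniq : ∀ (σ : ℕ → Bool) (x y : X), x ∈ (⋂ n, nset (node ν bud F σ n)) →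
      y ∈ (⋂ n, nset (node ν bud F σ n)) → x = y := by
    intro σ x y hx hy
    have hedist : ∀ k, edist x y ≤ pdiam k := by
      intro k
      obtain ⟨n, P, hP, hdia, hns⟩ := small_singleton hreg hbud hF h0 hfin σ k
      have hx' := Set.mem_iInter.1 hx n
      have hy' := Set.mem_iInter.1 hy n
      rw [hns] at hx' hy'
      exact (EMetric.edist_le_diam_of_mem hx' hy').trans hdia
    have h00 : edist x y ≤ 0 := ge_of_tendsto' pdiam_tendsto hedist
    exact edist_le_zero.1 h00
  have hinj : Function.Injective f := by
    intro σ τ hfe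
    by_contra hne
    have hex : ∃ k, σ k ≠ τ k := by
      by_contra hc'
      push_neg at hc'
      exact hne (funext hc')
    obtain ⟨k, hk⟩ := hex
    have hd := node_disjoint hreg hbud hF h0 hfin (k+1) ⟨k, Nat.lt_succ_self k, hk⟩
    have h1 := hfmem σ (k+1)
    have h2 := hfmem τ (k+1)
    rw [← hfe] at h2
    exact Set.disjoint_left.1 hd h1 h2
  have hcont : Continuous f := by
    rw [continuous_iff_continuousAt]
    intro σ
    rw [ContinuousAt, EMetric.tendsto_nhds]
    intro ε hε
    obtain ⟨k, hk⟩ := (pdiam_tendsto.eventually (gt_mem_nhds hε)).exists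
    obtain ⟨n, P, hP, hdia, hns⟩ := small_singleton hreg hbud hF h0 hfin σ k
    have hcyl : {τ : ℕ → Bool | ∀ i < n, τ i = σ i} ∈ nhds σ := by
      have heq : {τ : ℕ → Bool | ∀ i < n, τ i = σ i}
          = ⋂ i ∈ Finset.range n, {τ : ℕ → Bool | τ i = σ i} := by
        ext τ
        simp [Finset.mem_range]
      rw [heq]
      refine (Filter.biInter_finset_mem _).2 fun i _ => ?_
      have hopen : IsOpen {τ : ℕ → Bool | τ i = σ i} := by
        have heq2 : {τ : ℕ → Bool | τ i = σ i}
            = (fun τ : ℕ → Bool => τ i) ⁻¹' ({σ i} : Set Bool) := by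
          ext τ
          simp
        rw [heq2]
        exact (continuous_apply i).isOpen_preimage _ (isOpen_discrete _)
      exact hopen.mem_nhds rfl
    filter_upwards [hcyl] with τ hτ
    have hnode : node ν bud F τ n = node ν bud F σ n := node_congr hτ
    have h1 : f τ ∈ P := by
      have := hfmem τ n
      rw [hnode, hns] at this
      exact this
    have h2 : f σ ∈ P := by
      have := hfmem σ n
      rw [hns] at this
      exact this
    exact lt_of_le_of_lt ((EMetric.edist_le_diam_of_mem h1 h2).trans hdia) hk
  have hrange : Set.range f = limset ν bud F := by
    apply Set.Subset.antisymm
    · rintro x ⟨σ, rfl⟩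
      exact Set.mem_iInter.2 fun n => nset_node_subset_lvl σ n (hfmem σ n)
    · intro x hx
      set W : ℕ → ℕ × List (Set X) := fun n => Nat.rec ((0 : ℕ), [F])
        (fun k S => step ν (bud k) S
          (if x ∈ nset (step ν (bud k) S true) then true else false)) n with hW
      set σx : ℕ → Bool := fun n =>
        if x ∈ nset (step ν (bud n) (W n) true) then true else false with hσx
      have hWnode : ∀ n, node ν bud F σx n = W n := by
        intro n
        induction n with
        | zero => rfl
        | succ n ih =>
            show step ν (bud n) (node ν bud F σx n) (σx n) = W (n+1)
            rw [ih]
      have hxW : ∀ n, x ∈ nset (node ν bud F σx n) := by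
        intro n
        induction n with
        | zero =>
            rw [node_zero]
            exact limset_subset hreg hbud hF h0 hfin hx
        | succ n ih =>
            have hx1 : x ∈ lvl ν bud F (n+1) := Set.mem_iInter.1 hx (n+1)
            obtain ⟨s, hs⟩ := Set.mem_iUnion.1 hx1
            have hsparent : x ∈ nset (node ν bud F (ext s) n) := node_subset_succ n hs
            have hagree : ∀ k < n, ext s k = σx k := by
              intro k hk
              by_contra hne
              have hd := node_disjoint hreg hbud hF h0 hfin n ⟨k, hk, hne⟩
              exact Set.disjoint_left.1 hd hsparent ih
            have hpeq : node ν bud F (ext s) n = node ν bud F σx n := node_congr hagree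
            have hstep : x ∈ nset (step ν (bud n) (node ν bud F σx n) (ext s n)) := by
              have hrfl : nset (node ν bud F (ext s) (n+1))
                  = nset (step ν (bud n) (node ν bud F (ext s) n) (ext s n)) := rfl
              rw [hrfl, hpeq] at hs
              exact hs
            show x ∈ nset (step ν (bud n) (node ν bud F σx n) (σx n))
            have hWn : node ν bud F σx n = W n := hWnode n
            by_cases hxt : x ∈ nset (step ν (bud n) (node ν bud F σx n) true)
            · have hbt : σx n = true := by
                rw [hσx]
                simp only
                rw [if_pos (by rwa [hWn] at hxt)]
              rw [hbt]
              exact hxt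
            · cases hb : ext s n with
              | true =>
                  rw [hb] at hstep
                  exact absurd hstep hxt
              | false =>
                  have hbf : σx n = false := by
                    rw [hσx]
                    simp only
                    rw [if_neg (by rwa [hWn] at hxt)]
                  rw [hbf]
                  rw [hb] at hstep
                  exact hstep
      have hxmem : x ∈ ⋂ n, nset (node ν bud F σx n) := Set.mem_iInter.2 hxW
      exact ⟨σx, (huniq σx x (f σx) hxmem (hnested σx).some_mem).symm⟩
  set e : (ℕ → Bool) ≃ Set.range f := Equiv.ofInjective f hinj with he
  have hecont : Continuous e := by
    apply Continuous.subtype_mk hcont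
  have homeo : (ℕ → Bool) ≃ₜ Set.range f := Continuous.homeoOfEquivCompactToT2 (f := e) hecont
  refine ⟨Set.range f, ?_, isCompact_range hcont, ⟨homeo.symm⟩, ?_⟩
  · rw [hrange]
    exact limset_subset hreg hbud hF h0 hfin
  · rw [hrange]
    by_contra hzero
    push_neg at hzero
    have hz : ν (limset ν bud F) = 0 := le_antisymm hzero zero_le
    have hterm : ∀ n : ℕ, (2:ℝ≥0∞)^n * bud n = c * p^n := by
      intro n
      have h1 : (2:ℝ≥0∞)^n * (c * (p^n * p^n)) = c * ((2*p)^n * p^n) := by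
        rw [mul_pow]
        ring
      have h2 : (2:ℝ≥0∞) * p = 1 := by
        rw [hp]
        exact ENNReal.mul_inv_cancel (by norm_num) (by norm_num)
      show (2:ℝ≥0∞)^n * (c * (p^n * p^n)) = c * p^n
      rw [h1, h2, one_pow, one_mul]
    have hsum : ∑' n, (2:ℝ≥0∞) ^ n * bud n = c * 2 := by
      calc ∑' n, (2:ℝ≥0∞) ^ n * bud n = ∑' n, c * p^n := tsum_congr hterm
        _ = c * ∑' n, p^n := ENNReal.tsum_mul_left
        _ = c * 2 := by
            rw [hp, ENNReal.tsum_geometric]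
            norm_num [ENNReal.one_sub_inv_two]
    have hloss : ν (F \ limset ν bud F) ≤ c * 2 := by
      rw [← hsum]
      exact measure_diff_limset hreg hbud hF h0 hfin
    have hFle : ν F ≤ ν (F ∩ limset ν bud F) + ν (F \ limset ν bud F) :=
      measure_le_inter_add_diff ν F _
    have hFle2 : ν F ≤ c * 2 := by
      calc ν F ≤ ν (F ∩ limset ν bud F) + ν (F \ limset ν bud F) := hFle
        _ ≤ ν (limset ν bud F) + (c * 2) := by gcongr; exact inter_subset_right
        _ = c * 2 := by rw [hz, zero_add]
    have hc2 : c * 2 = ν F * p^2 := by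
      rw [hc]
      rw [show p^3 = p^2 * p from by ring, mul_assoc, mul_assoc]
      congr 1
      rw [show p * 2 = 1 from by rw [hp]; exact ENNReal.inv_mul_cancel (by norm_num) (by norm_num)]
      rw [mul_one]
    have hlt : ν F * p^2 < ν F := by
      conv_rhs => rw [← mul_one (ν F)]
      refine (ENNReal.mul_lt_mul_iff_right h0.ne' hfin).2 ?_
      rw [hp]
      calc (2⁻¹:ℝ≥0∞)^2 ≤ 2⁻¹ := by
            rw [sq]
            calc (2⁻¹:ℝ≥0∞) * 2⁻¹ ≤ 1 * 2⁻¹ := by gcongr; norm_num [ENNReal.inv_le_one]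
              _ = 2⁻¹ := one_mul _
        _ < 1 := ENNReal.inv_lt_one.2 one_lt_two
    rw [hc2] at hFle2
    exact absurd hFle2 (not_le.2 hlt)


end CantorAux

open CantorAux MeasureTheory Set ENNReal Filter

/-- Given a metric space `X` and a σ-finite positive regular Borel measure `μ` on `X`,
there exist an at most countable collection `𝒞` of pairwise disjoint Cantor sets in `X`
and an at most countable set `S ⊆ X` disjoint from each member of `𝒞` such that
`μ (X \ ((⋃ 𝒞) ∪ S)) = 0`. -/
theorem exists_countable_cantorSets_and_countable_set_ae_cover
    {X : Type*} [MetricSpace X] [MeasurableSpace X] [BorelSpace X]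
    (μ : Measure X) [SigmaFinite μ] [μ.InnerRegular] [μ.OuterRegular] :
    ∃ (𝒞 : Set (Set X)) (S : Set X),
      𝒞.Countable ∧
      (∀ C ∈ 𝒞, IsCantorSet C) ∧
      𝒞.Pairwise Disjoint ∧
      S.Countable ∧
      (∀ C ∈ 𝒞, Disjoint S C) ∧
      μ (⋃₀ 𝒞 ∪ S)ᶜ = 0 := by
  classical
  -- the set of atoms
  set S₀ : Set X := {x : X | μ {x} ≠ 0} with hS₀
  have hS₀count : S₀.Countable := by
    have hcnt := Measure.countable_meas_pos_of_disjoint_iUnion (μ := μ)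
      (As := fun x : X => ({x} : Set X)) (fun x => measurableSet_singleton x)
      (fun x y hxy => by simpa using hxy)
    refine hcnt.mono ?_
    intro x hx
    exact pos_iff_ne_zero.2 hx
  have hS₀meas : MeasurableSet S₀ := hS₀count.measurableSet
  set ν : Measure X := μ.restrict S₀ᶜ with hν
  haveI : NullSingletonClass ν := by
    constructor
    intro x
    rw [hν, Measure.restrict_apply (measurableSet_singleton x)]
    by_cases hx : x ∈ S₀
    · have hempty : ({x} : Set X) ∩ S₀ᶜ = ∅ :=
        Set.singleton_inter_eq_empty.2 (by simpa using hx)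
      rw [hempty, measure_empty]
    · have h1 : ({x} : Set X) ∩ S₀ᶜ = {x} := by
        rw [Set.inter_eq_self_of_subset_left]
        simpa using hx
      rw [h1]
      simpa [hS₀] using hx
  have hregS : ∀ A : Set X, MeasurableSet A → ∀ r, r < ν A →
      ∃ K, K ⊆ A ∧ K ⊆ S₀ᶜ ∧ IsCompact K ∧ r < ν K := by
    intro A hA r hr
    rw [hν, Measure.restrict_apply hA] at hr
    obtain ⟨K, hKsub, hKc, hKm⟩ := (hA.inter hS₀meas.compl).exists_lt_isCompact hr
    have hKS : K ⊆ S₀ᶜ := hKsub.trans inter_subset_right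
    refine ⟨K, hKsub.trans inter_subset_left, hKS, hKc, ?_⟩
    rw [hν, Measure.restrict_apply hKc.isClosed.measurableSet,
      Set.inter_eq_self_of_subset_left hKS]
    exact hKm
  have hreg : Reg ν := fun A hA r hr => by
    obtain ⟨K, h1, _, h3, h4⟩ := hregS A hA r hr
    exact ⟨K, h1, h3, h4⟩
  -- spanning sets
  set B : ℕ → Set X := spanningSets ν with hB
  have hBmeas : ∀ m, MeasurableSet (B m) := fun m => measurableSet_spanningSets ν m
  have hBfin : ∀ m, ν (B m) < ∞ := fun m => measure_spanningSets_lt_top ν m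
  have hBunion : ⋃ m, B m = Set.univ := iUnion_spanningSets ν
  set idx : ℕ → ℕ := fun n => (Nat.unpair n).1 with hidx
  -- greedy selection
  set Aset : List (Set X) → ℕ → Set X :=
    fun l n => (lU l)ᶜ ∩ B (idx n) ∩ S₀ᶜ with hAset
  set tval : List (Set X) → ℕ → ℝ≥0∞ := fun l n =>
    sSup {r : ℝ≥0∞ | ∃ E : Set X, IsCompact E ∧ Nonempty (E ≃ₜ (ℕ → Bool)) ∧
      E ⊆ Aset l n ∧ ν E = r} with htval
  set pick : List (Set X) → ℕ → Set X := fun l n =>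
    if h : ∃ E : Set X, IsCompact E ∧ Nonempty (E ≃ₜ (ℕ → Bool)) ∧ E ⊆ Aset l n ∧
        min (tval l n) 1 / 2 < ν E then h.choose else ∅ with hpick
  set g : ℕ → List (Set X) := fun n => Nat.rec [] (fun k l => pick l k :: l) n with hg
  set D : ℕ → Set X := fun n => pick (g n) n with hD
  have hgsucc : ∀ n, g (n+1) = D n :: g n := fun n => rfl
  have hDspec : ∀ n, D n = ∅ ∨ (IsCompact (D n) ∧ Nonempty (D n ≃ₜ (ℕ → Bool)) ∧
      D n ⊆ Aset (g n) n ∧ min (tval (g n) n) 1 / 2 < ν (D n)) := by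
    intro n
    rw [hD]
    simp only
    rw [hpick]
    simp only
    by_cases hcase : ∃ E : Set X, IsCompact E ∧ Nonempty (E ≃ₜ (ℕ → Bool)) ∧
        E ⊆ Aset (g n) n ∧ min (tval (g n) n) 1 / 2 < ν E
    · beta_reduce
      rw [dif_pos hcase]
      exact Or.inr hcase.choose_spec
    · beta_reduce
      rw [dif_neg hcase]
      exact Or.inl rfl
  have hDmeas : ∀ n, MeasurableSet (D n) := by
    intro n
    rcases hDspec n with h | h
    · rw [h]; exact MeasurableSet.empty
    · exact h.1.isClosed.measurableSet
  have hDk_mem : ∀ k n, k < n → D k ∈ g n := by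
    intro k n
    induction n with
    | zero => omega
    | succ n ih =>
        intro hk
        rw [hgsucc]
        rcases Nat.lt_succ_iff_lt_or_eq.1 hk with h | h
        · exact List.mem_cons_of_mem _ (ih h)
        · subst h; exact List.mem_cons_self
  have hmem_g : ∀ n Q, Q ∈ g n → ∃ k, k < n ∧ Q = D k := by
    intro n
    induction n with
    | zero => intro Q hQ; simp [hg] at hQ
    | succ n ih =>
        intro Q hQ
        rw [hgsucc] at hQ
        rcases List.mem_cons.1 hQ with h | h
        · exact ⟨n, Nat.lt_succ_self n, h⟩
        · obtain ⟨k, hk, hQk⟩ := ih Q h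
          exact ⟨k, by omega, hQk⟩
  have hdisj : ∀ i j, i < j → Disjoint (D i) (D j) := by
    intro i j hij
    rcases hDspec j with h | h
    · rw [h]; exact disjoint_empty _
    · have h1 : D j ⊆ (lU (g j))ᶜ := h.2.2.1.trans (inter_subset_left.trans inter_subset_left)
      have h2 : D i ⊆ lU (g j) := by
        intro x hx
        exact Set.mem_iUnion₂.2 ⟨D i, hDk_mem i j hij, hx⟩
      exact Set.disjoint_of_subset h2 h1 disjoint_compl_right
  -- the key goodness property
  have hgood : ∀ n, (∃ E : Set X, IsCompact E ∧ Nonempty (E ≃ₜ (ℕ → Bool)) ∧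
      E ⊆ Aset (g n) n ∧ 0 < ν E) →
      (D n ⊆ Aset (g n) n ∧ min (tval (g n) n) 1 / 2 < ν (D n)) := by
    intro n ⟨E, hEc, hEh, hEsub, hE0⟩
    have hle : ν E ≤ tval (g n) n := le_sSup ⟨E, hEc, hEh, hEsub, rfl⟩
    have ht0 : 0 < tval (g n) n := lt_of_lt_of_le hE0 hle
    have hmin0 : (0:ℝ≥0∞) < min (tval (g n) n) 1 := lt_min ht0 zero_lt_one
    have hminfin : min (tval (g n) n) 1 ≠ ∞ :=
      ((min_le_right _ _).trans_lt one_lt_top).ne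
    have hlt : min (tval (g n) n) 1 / 2 < tval (g n) n :=
      lt_of_lt_of_le (ENNReal.half_lt_self hmin0.ne' hminfin) (min_le_left _ _)
    obtain ⟨r, hrmem, hrgt⟩ := lt_sSup_iff.1 hlt
    obtain ⟨E', hE'c, hE'h, hE'sub, hE'eq⟩ := hrmem
    have hex : ∃ E : Set X, IsCompact E ∧ Nonempty (E ≃ₜ (ℕ → Bool)) ∧ E ⊆ Aset (g n) n ∧
        min (tval (g n) n) 1 / 2 < ν E := ⟨E', hE'c, hE'h, hE'sub, hE'eq ▸ hrgt⟩
    have : D n = hex.choose := by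
      rw [hD]
      simp only
      rw [hpick]
      simp only
      rw [dif_pos hex]
    rw [this]
    exact ⟨hex.choose_spec.2.2.1, hex.choose_spec.2.2.2⟩
  -- the null part
  have hnull : ν ((⋃ n, D n)ᶜ) = 0 := by
    have hpermn : ∀ m, ν ((⋃ n, D n)ᶜ ∩ B m) = 0 := by
      intro m
      by_contra hpos0
      have hpos : 0 < ν ((⋃ n, D n)ᶜ ∩ B m) := pos_iff_ne_zero.2 hpos0
      have hWmeas : MeasurableSet ((⋃ n, D n)ᶜ ∩ B m) :=
        (MeasurableSet.iUnion hDmeas).compl.inter (hBmeas m)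
      obtain ⟨K, hKW, hKS, hKc, hK0⟩ := hregS _ hWmeas 0 hpos
      have hKfin : ν K ≠ ∞ :=
        ((measure_mono (hKW.trans inter_subset_right)).trans_lt (hBfin m)).ne
      obtain ⟨C, hCK, hCc, hCh, hC0⟩ := core hreg hKc hK0 hKfin
      set δ : ℝ≥0∞ := min (ν C) 1 / 2 with hδ
      have hδ0 : 0 < δ := ENNReal.div_pos (lt_min hC0 zero_lt_one).ne' (by norm_num)
      -- C is a candidate at every stage n with idx n = m
      have hCsub : ∀ n, idx n = m → C ⊆ Aset (g n) n := by
        intro n hn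
        rw [hAset]
        simp only
        rw [hn]
        refine Set.subset_inter (Set.subset_inter ?_ ?_) (hCK.trans hKS)
        · intro x hx
          simp only [Set.mem_compl_iff]
          intro hmem
          obtain ⟨Q, hQ, hxQ⟩ := Set.mem_iUnion₂.1 hmem
          obtain ⟨k, hkn, rfl⟩ := hmem_g n Q hQ
          have hxD : x ∈ (⋃ n, D n)ᶜ := (hCK.trans (hKW.trans inter_subset_left)) hx
          exact hxD (Set.mem_iUnion.2 ⟨k, hxQ⟩)
        · exact hCK.trans (hKW.trans inter_subset_right)
      have hbig : ∀ n, idx n = m → δ < ν (D n) ∧ D n ⊆ B m := by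
        intro n hn
        have hC' : ∃ E : Set X, IsCompact E ∧ Nonempty (E ≃ₜ (ℕ → Bool)) ∧
            E ⊆ Aset (g n) n ∧ 0 < ν E := ⟨C, hCc, hCh, hCsub n hn, hC0⟩
        obtain ⟨hsub, hgt⟩ := hgood n hC'
        constructor
        · refine lt_of_le_of_lt ?_ hgt
          rw [hδ]
          have hmm : min (ν C) 1 ≤ min (tval (g n) n) 1 :=
            min_le_min (le_sSup ⟨C, hCc, hCh, hCsub n hn, rfl⟩) le_rfl
          gcongr
        · intro x hx
          have := hsub hx
          rw [hAset] at this
          simp only at this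
          rw [hn] at this
          exact this.1.2
      -- infinitely many such n
      set e : ℕ → ℕ := fun j => Nat.pair m j with he
      have hidxe : ∀ j, idx (e j) = m := by
        intro j
        rw [he, hidx]
        simp [Nat.unpair_pair]
      have heinj : Function.Injective e := by
        intro a b hab
        have := congrArg Nat.unpair hab
        rw [he] at this
        simp only [Nat.unpair_pair] at this
        exact (Prod.ext_iff.1 this).2
      have hDedisj : Pairwise (Function.onFun Disjoint fun j => D (e j)) := by
        intro a b hab
        have : e a ≠ e b := fun hc => hab (heinj hc)
        rcases lt_or_gt_of_ne this with h | h
        · exact hdisj _ _ h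
        · exact (hdisj _ _ h).symm
      have hsum : ν (⋃ j, D (e j)) = ∑' j, ν (D (e j)) :=
        measure_iUnion hDedisj fun j => hDmeas (e j)
      have hsuble : (⋃ j, D (e j)) ⊆ B m := by
        refine Set.iUnion_subset fun j => ?_
        exact (hbig (e j) (hidxe j)).2
      have hge : ∀ j, δ ≤ ν (D (e j)) := fun j => (hbig (e j) (hidxe j)).1.le
      have htop : (∑' j, ν (D (e j))) = ∞ := by
        have : (∑' _ : ℕ, δ) ≤ ∑' j, ν (D (e j)) := ENNReal.tsum_le_tsum hge
        rw [ENNReal.tsum_const_eq_top_of_ne_zero hδ0.ne'] at this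
        exact top_le_iff.1 this
      have : ν (B m) = ∞ := by
        have h1 := measure_mono (μ := ν) hsuble
        rw [hsum, htop] at h1
        exact top_le_iff.1 h1
      exact absurd this (hBfin m).ne
    have hcover : (⋃ n, D n)ᶜ = ⋃ m, ((⋃ n, D n)ᶜ ∩ B m) := by
      rw [← Set.inter_iUnion, hBunion, Set.inter_univ]
    rw [hcover]
    exact measure_iUnion_null hpermn
  -- assemble the answer
  refine ⟨Set.range D \ {∅}, S₀, ?_, ?_, ?_, hS₀count, ?_, ?_⟩
  · exact (Set.countable_range D).mono Set.diff_subset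
  · rintro C ⟨⟨n, rfl⟩, hne⟩
    rcases hDspec n with h | h
    · exact absurd h (by simpa using hne)
    · exact ⟨h.2.1.some⟩
  · rintro C ⟨⟨i, rfl⟩, hCne⟩ C' ⟨⟨j, rfl⟩, hC'ne⟩ hne
    have hij : i ≠ j := fun hc => hne (by rw [hc])
    rcases lt_or_gt_of_ne hij with h | h
    · exact hdisj _ _ h
    · exact (hdisj _ _ h).symm
  · rintro C ⟨⟨n, rfl⟩, hne⟩
    rcases hDspec n with h | h
    · exact absurd h (by simpa using hne)
    · have : D n ⊆ S₀ᶜ := h.2.2.1.trans inter_subset_right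
      exact Set.disjoint_of_subset_right this disjoint_compl_right
  · have hsU : ⋃₀ (Set.range D \ {∅}) = ⋃ n, D n := by
      apply Set.Subset.antisymm
      · rintro x ⟨C, ⟨⟨n, rfl⟩, -⟩, hx⟩
        exact Set.mem_iUnion.2 ⟨n, hx⟩
      · rintro x hx
        obtain ⟨n, hn⟩ := Set.mem_iUnion.1 hx
        refine Set.mem_sUnion.2 ⟨D n, ⟨⟨n, rfl⟩, ?_⟩, hn⟩
        simp only [Set.mem_singleton_iff]
        intro hc
        rw [hc] at hn
        exact hn
    rw [hsU, Set.compl_union]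
    have hmeasU : MeasurableSet ((⋃ n, D n)ᶜ) := (MeasurableSet.iUnion hDmeas).compl
    have : μ ((⋃ n, D n)ᶜ ∩ S₀ᶜ) = ν ((⋃ n, D n)ᶜ) := by
      rw [hν, Measure.restrict_apply hmeasU]
    rw [this, hnull]
end
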